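/- Let n ≥ 2, U = {1,…,n}, and let T be a collection of subsets of U with ⋃T = U and U ∉ T. Define T̂ = {{j} : j ∈ U} ∪ ({S ∩ {1,…,i} : S ∈ T, 1 ≤ i ≤ n} ∖ {∅}), and let ŝ be the minimum size of a DAG compression of the twinned incidence graph of T̂. Then for every natural number k: there exists X ⊆ T with ⋃X = U and |X| ≤ k if and only if the twinned incidence graph of T̂ ∪ {U} has a DAG compression of size at most ŝ + k + 2. -/

import Mathlib

open Finset

section Defs

variable {α : Type*}

/-- The arc relation induced by a finite set of arcs. -/
def ArcRel (A : Finset (α × α)) (x y : α) : Prop := (x, y) ∈ A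

/-- The cluster of a vertex `v`: the set of original vertices (elements of `Vbar`,
which are exactly the sinks of the cluster DAG) reachable from `v` in `(V, A)`. -/
def Cluster [DecidableEq α] (Vbar : Finset α) (A : Finset (α × α)) (v : α) : Set α :=
  {u | u ∈ Vbar ∧ Relation.ReflTransGen (ArcRel A) v u}

/-- `(V, A, E)` is a DAG compression of the directed graph `(Vbar, Ebar)`. -/
structure IsDagCompression [DecidableEq α] (Vbar : Finset α) (Ebar : Finset (α × α))
    (V : Finset α) (A E : Finset (α × α)) : Prop where
  vbar_subset : Vbar ⊆ V
  arcs_subset : A ⊆ V ×ˢ V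
  acyclic : ∀ v : α, ¬ Relation.TransGen (ArcRel A) v v
  sinks : ∀ v ∈ V, ((∀ u, (v, u) ∉ A) ↔ v ∈ Vbar)
  edges_subset : E ⊆ V ×ˢ V
  represents : (↑Ebar : Set (α × α)) =
    ⋃ e ∈ E, (Cluster Vbar A e.1) ×ˢ (Cluster Vbar A e.2)

/-- An optimal DAG compression: no DAG compression of the same graph has smaller size
`|A| + |E|`. -/
def IsOptimalDagCompression [DecidableEq α] (Vbar : Finset α) (Ebar : Finset (α × α))
    (V : Finset α) (A E : Finset (α × α)) : Prop :=
  IsDagCompression Vbar Ebar V A E ∧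
    ∀ (V' : Finset α) (A' E' : Finset (α × α)),
      IsDagCompression Vbar Ebar V' A' E' → A.card + E.card ≤ A'.card + E'.card

/-- The minimum size `|A| + |E|` of a DAG compression of `(Vbar, Ebar)`. -/
noncomputable def minCompSize [DecidableEq α] (Vbar : Finset α) (Ebar : Finset (α × α)) : ℕ :=
  sInf {n | ∃ (V : Finset α) (A E : Finset (α × α)),
    IsDagCompression Vbar Ebar V A E ∧ A.card + E.card = n}

/-- Two vertices are twins in a directed graph with edge set `F`. -/
def Twins (F : Finset (α × α)) (t₁ t₂ : α) : Prop :=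
  (∀ v, (v, t₁) ∈ F ↔ (v, t₂) ∈ F) ∧ (∀ v, (t₁, v) ∈ F ↔ (t₂, v) ∈ F)

/-- `(V, A)` is a rooted tree: there is a root `r ∈ V` from which every vertex of `V`
is reachable by a unique directed path. -/
def IsTreeOn (V : Finset α) (A : Finset (α × α)) : Prop :=
  ∃ r ∈ V, ∀ v ∈ V, ∃! l : List α,
    l.Chain' (ArcRel A) ∧ l.head? = some r ∧ l.getLast? = some v

end Defs

/-- Vertex set of the `g × g` rook graph: the grid `{1,…,g} × {1,…,g}`. -/
def rookV (g : ℕ) : Finset (ℕ × ℕ) := Finset.Icc 1 g ×ˢ Finset.Icc 1 g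

/-- Edge set of the `g × g` rook graph: `(r₁,c₁) → (r₂,c₂)` iff `r₁ = r₂ ∨ c₁ = c₂`. -/
def rookE (g : ℕ) : Finset ((ℕ × ℕ) × (ℕ × ℕ)) :=
  (rookV g ×ˢ rookV g).filter (fun e => e.1.1 = e.2.1 ∨ e.1.2 = e.2.2)

section Tig

variable {α : Type*} [DecidableEq α]

/-- Vertex type used for twinned incidence graphs: either an element of the universe
(second shore) or one of the fresh vertices `a_S`, `b_S` (first shore). -/
abbrev TigVertex (α : Type*) := α ⊕ (Finset α × Bool)

/-- The fresh vertex `a_S`. -/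
def aVert (S : Finset α) : TigVertex α := Sum.inr (S, false)

/-- The fresh vertex `b_S`. -/
def bVert (S : Finset α) : TigVertex α := Sum.inr (S, true)

/-- Vertex set of the twinned incidence graph of a collection `T` of subsets of `U`. -/
def tigV (U : Finset α) (T : Finset (Finset α)) : Finset (TigVertex α) :=
  U.image Sum.inl ∪ T.image aVert ∪ T.image bVert

/-- Edge set of the twinned incidence graph: edges `(a_S, s)` and `(b_S, s)` for
`S ∈ T` and `s ∈ S`. -/
def tigE (T : Finset (Finset α)) : Finset (TigVertex α × TigVertex α) :=
  T.biUnion fun S =>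
    S.image (fun s => (aVert S, Sum.inl s)) ∪ S.image (fun s => (bVert S, Sum.inl s))

end Tig

/-- `{S ∩ {1,…,i} : S ∈ T, 1 ≤ i ≤ m} ∖ {∅}` together with all singletons `{j}`, `j ∈ {1,…,m}`. -/
def hatCollection (m : ℕ) (T : Finset (Finset ℕ)) : Finset (Finset ℕ) :=
  (Finset.Icc 1 m).image (fun j => ({j} : Finset ℕ)) ∪
    ((T ×ˢ Finset.Icc 1 m).image (fun p => p.1 ∩ Finset.Icc 1 p.2)).erase ∅
set_option linter.unusedSectionVars false
set_option linter.unusedVariables false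
set_option linter.unreachableTactic false
set_option linter.unusedTactic false
set_option maxHeartbeats 1000000

section Aux
variable {α : Type*} [DecidableEq α]

open Relation

lemma reach_of_sink {A : Finset (α × α)} {v w : α} (hs : ∀ u, (v, u) ∉ A)
    (h : Relation.ReflTransGen (ArcRel A) v w) : w = v := by
  induction h with
  | refl => rfl
  | tail _ hb ih => exact absurd (ih ▸ hb) (hs _)

lemma cluster_mono_reach {Vb : Finset α} {A : Finset (α × α)} {v w : α}
    (h : Relation.ReflTransGen (ArcRel A) v w) : Cluster Vb A w ⊆ Cluster Vb A v :=
  fun u hu => ⟨hu.1, h.trans hu.2⟩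

lemma cluster_of_sink {Vb : Finset α} {A : Finset (α × α)} {v : α} (hv : v ∈ Vb)
    (hs : ∀ u, (v, u) ∉ A) : Cluster Vb A v = {v} := by
  ext u
  constructor
  · intro hu; exact (reach_of_sink hs hu.2 : u = v)
  · rintro rfl; exact ⟨hv, Relation.ReflTransGen.refl⟩

variable {Vbar V : Finset α} {Ebar A E : Finset (α × α)}

lemma IsDagCompression.sink_of_vbar (hD : IsDagCompression Vbar Ebar V A E)
    {v : α} (hv : v ∈ Vbar) : ∀ u, (v, u) ∉ A :=
  (hD.sinks v (hD.vbar_subset hv)).mpr hv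

lemma IsDagCompression.cluster_vbar (hD : IsDagCompression Vbar Ebar V A E)
    {v : α} (hv : v ∈ Vbar) : Cluster Vbar A v = {v} :=
  cluster_of_sink hv (hD.sink_of_vbar hv)

lemma IsDagCompression.pair_mem (hD : IsDagCompression Vbar Ebar V A E)
    {e : α × α} (he : e ∈ E) {x y : α} (hx : x ∈ Cluster Vbar A e.1)
    (hy : y ∈ Cluster Vbar A e.2) : (x, y) ∈ Ebar := by
  have : ((x, y) : α × α) ∈ (↑Ebar : Set (α × α)) := by
    rw [hD.represents]
    exact Set.mem_biUnion he (Set.mk_mem_prod hx hy)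
  exact_mod_cast this

lemma IsDagCompression.exists_edge (hD : IsDagCompression Vbar Ebar V A E)
    {x y : α} (h : (x, y) ∈ Ebar) :
    ∃ e ∈ E, x ∈ Cluster Vbar A e.1 ∧ y ∈ Cluster Vbar A e.2 := by
  have : ((x, y) : α × α) ∈ (↑Ebar : Set (α × α)) := by exact_mod_cast h
  rw [hD.represents] at this
  simp only [Set.mem_iUnion] at this
  obtain ⟨e, he, hmem⟩ := this
  exact ⟨e, he, hmem.1, hmem.2⟩

lemma IsDagCompression.mem_V_of_cluster (hD : IsDagCompression Vbar Ebar V A E)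
    {v u : α} (hv : v ∈ V) (hu : Relation.ReflTransGen (ArcRel A) v u) : u ∈ V := by
  induction hu with
  | refl => exact hv
  | tail _ hb ih => exact (Finset.mem_product.mp (hD.arcs_subset hb)).2

/-- Splitting a reflexive-transitive path at the first place a predicate fails. -/
lemma reach_split {r : α → α → Prop} {P : α → Prop} {x y : α}
    (h : Relation.ReflTransGen r x y) (hx : P x) (hy : ¬ P y) :
    ∃ z z', r z z' ∧ P z ∧ ¬ P z' ∧ Relation.ReflTransGen r x z ∧
      Relation.ReflTransGen r z' y := by
  induction h with
  | refl => exact absurd hx hy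
  | @tail b c hab hbc ih =>
    by_cases hPb : P b
    · exact ⟨b, c, hbc, hPb, hy, by assumption, Relation.ReflTransGen.refl⟩
    · obtain ⟨z, z', h1, h2, h3, h4, h5⟩ := ih hPb
      exact ⟨z, z', h1, h2, h3, h4, h5.tail hbc⟩

/-- tig membership lemmas -/
lemma mem_tigV {U : Finset α} {T : Finset (Finset α)} {v : TigVertex α} :
    v ∈ tigV U T ↔ (∃ j ∈ U, v = Sum.inl j) ∨ ∃ S ∈ T, v = aVert S ∨ v = bVert S := by
  simp only [tigV, Finset.mem_union, Finset.mem_image]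
  constructor
  · rintro ((⟨j, hj, rfl⟩ | ⟨S, hS, rfl⟩) | ⟨S, hS, rfl⟩)
    · exact Or.inl ⟨j, hj, rfl⟩
    · exact Or.inr ⟨S, hS, Or.inl rfl⟩
    · exact Or.inr ⟨S, hS, Or.inr rfl⟩
  · rintro (⟨j, hj, rfl⟩ | ⟨S, hS, (rfl | rfl)⟩)
    · exact Or.inl (Or.inl ⟨j, hj, rfl⟩)
    · exact Or.inl (Or.inr ⟨S, hS, rfl⟩)
    · exact Or.inr ⟨S, hS, rfl⟩

lemma mem_tigE {T : Finset (Finset α)} {p : TigVertex α × TigVertex α} :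
    p ∈ tigE T ↔ ∃ S ∈ T, ∃ s ∈ S, (p.1 = aVert S ∨ p.1 = bVert S) ∧ p.2 = Sum.inl s := by
  simp only [tigE, Finset.mem_biUnion, Finset.mem_union, Finset.mem_image]
  constructor
  · rintro ⟨S, hS, (⟨s, hs, rfl⟩ | ⟨s, hs, rfl⟩)⟩
    · exact ⟨S, hS, s, hs, Or.inl rfl, rfl⟩
    · exact ⟨S, hS, s, hs, Or.inr rfl, rfl⟩
  · rintro ⟨S, hS, s, hs, (h1 | h1), h2⟩
    · exact ⟨S, hS, Or.inl ⟨s, hs, by rw [← h1, ← h2]⟩⟩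
    · exact ⟨S, hS, Or.inr ⟨s, hs, by rw [← h1, ← h2]⟩⟩

lemma aVert_ne_bVert {S S' : Finset α} : aVert S ≠ bVert S' := by
  simp [aVert, bVert]

lemma aVert_inj {S S' : Finset α} (h : aVert S = aVert S') : S = S' := by
  simpa [aVert] using h

lemma bVert_inj {S S' : Finset α} (h : bVert S = bVert S') : S = S' := by
  simpa [bVert] using h

lemma aVert_ne_inl {S : Finset α} {j : α} : aVert S ≠ Sum.inl j := by simp [aVert]
lemma bVert_ne_inl {S : Finset α} {j : α} : bVert S ≠ Sum.inl j := by simp [bVert]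

end Aux

section Chunk2
variable {α : Type*} [DecidableEq α]

lemma cluster_empty_subset {Vb : Finset α} {v : α} :
    Cluster Vb (∅ : Finset (α × α)) v ⊆ {v} := by
  intro u hu
  exact reach_of_sink (fun u h => absurd h (Finset.notMem_empty _)) hu.2

lemma cluster_empty_of_mem {Vb : Finset α} {v : α} (hv : v ∈ Vb) :
    Cluster Vb (∅ : Finset (α × α)) v = {v} :=
  cluster_of_sink hv (fun u h => absurd h (Finset.notMem_empty _))

lemma tigE_subset_prod {U : Finset α} {T : Finset (Finset α)}
    (hT : ∀ S ∈ T, S ⊆ U) : tigE T ⊆ tigV U T ×ˢ tigV U T := by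
  intro p hp
  obtain ⟨S, hS, s, hs, h1, h2⟩ := mem_tigE.mp hp
  rw [Finset.mem_product]
  constructor
  · rcases h1 with h1 | h1 <;> rw [h1] <;> exact mem_tigV.mpr (Or.inr ⟨S, hS, by simp⟩)
  · rw [h2]; exact mem_tigV.mpr (Or.inl ⟨s, hT S hS hs, rfl⟩)

/-- The trivial compression: every graph has one. -/
lemma trivial_compression (U : Finset α) (T : Finset (Finset α))
    (hT : ∀ S ∈ T, S ⊆ U) :
    IsDagCompression (tigV U T) (tigE T) (tigV U T) ∅ (tigE T) := by
  constructor
  · exact Finset.Subset.refl _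
  · simp
  · intro v hv
    cases hv with
    | single h => exact absurd h (Finset.notMem_empty _)
    | tail _ h => exact absurd h (Finset.notMem_empty _)
  · intro v hv
    simp only [Finset.notMem_empty]
    exact ⟨fun _ => hv, fun _ u => not_false⟩
  · exact tigE_subset_prod hT
  · ext ⟨x, y⟩
    simp only [Set.mem_iUnion, Set.mem_prod]
    constructor
    · intro h
      have h' : (x, y) ∈ tigE T := by exact_mod_cast h
      have hx : x ∈ tigV U T := (Finset.mem_product.mp (tigE_subset_prod hT h')).1
      have hy : y ∈ tigV U T := (Finset.mem_product.mp (tigE_subset_prod hT h')).2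
      exact ⟨(x, y), h', by
        rw [cluster_empty_of_mem hx, cluster_empty_of_mem hy]
        exact ⟨rfl, rfl⟩⟩
    · rintro ⟨e, he, hx, hy⟩
      have hx' := cluster_empty_subset hx
      have hy' := cluster_empty_subset hy
      simp only [Set.mem_singleton_iff] at hx' hy'
      subst hx'; subst hy'
      exact_mod_cast he

lemma minCompSize_le {Vbar V : Finset α} {Ebar A E : Finset (α × α)}
    (h : IsDagCompression Vbar Ebar V A E) :
    minCompSize Vbar Ebar ≤ A.card + E.card :=
  Nat.sInf_le ⟨V, A, E, h, rfl⟩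

lemma le_minCompSize {Vbar : Finset α} {Ebar : Finset (α × α)} {B : ℕ}
    (hne : ∃ (V : Finset α) (A E : Finset (α × α)), IsDagCompression Vbar Ebar V A E)
    (hB : ∀ (V : Finset α) (A E : Finset (α × α)),
      IsDagCompression Vbar Ebar V A E → B ≤ A.card + E.card) :
    B ≤ minCompSize Vbar Ebar := by
  obtain ⟨V, A, E, h⟩ := hne
  have hne' : {n | ∃ (V : Finset α) (A E : Finset (α × α)),
      IsDagCompression Vbar Ebar V A E ∧ A.card + E.card = n}.Nonempty :=
    ⟨A.card + E.card, V, A, E, h, rfl⟩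
  obtain ⟨V', A', E', h', hn⟩ := Nat.sInf_mem hne'
  rw [minCompSize, ← hn]
  exact hB V' A' E' h'

lemma reach_last_arc {r : α → α → Prop} {u x : α}
    (h : Relation.ReflTransGen r u x) (hne : u ≠ x) : ∃ t, r t x := by
  cases h.cases_tail with
  | inl h => exact absurd h.symm hne
  | inr h => obtain ⟨t, _, h2⟩ := h; exact ⟨t, h2⟩

open Classical in
/-- Base lower bound: any compression of a twinned incidence graph of a family of
nonempty sets has size at least `2 |T|`. -/
lemma twin_lower_bound {U : Finset α} {T : Finset (Finset α)}
    (hTne : ∀ S ∈ T, S.Nonempty) {V : Finset (TigVertex α)}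
    {A E : Finset (TigVertex α × TigVertex α)}
    (hD : IsDagCompression (tigV U T) (tigE T) V A E) :
    2 * T.card ≤ A.card + E.card := by
  classical
  set TW : Finset (TigVertex α) := T.image aVert ∪ T.image bVert with hTW
  have hinja : Function.Injective (aVert : Finset α → TigVertex α) := fun a b h => aVert_inj h
  have hinjb : Function.Injective (bVert : Finset α → TigVertex α) := fun a b h => bVert_inj h
  have hdisj : Disjoint (T.image aVert) (T.image bVert) := by
    rw [Finset.disjoint_left]
    rintro x hx hy
    obtain ⟨S, _, rfl⟩ := Finset.mem_image.mp hx
    obtain ⟨S', _, heq⟩ := Finset.mem_image.mp hy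
    exact aVert_ne_bVert heq.symm
  have hcard : TW.card = 2 * T.card := by
    rw [hTW, Finset.card_union_of_disjoint hdisj, Finset.card_image_of_injective _ hinja,
      Finset.card_image_of_injective _ hinjb]
    ring
  have serve : ∀ x ∈ TW, ∃ e ∈ E, x ∈ Cluster (tigV U T) A e.1 := by
    intro x hx
    have : ∃ S ∈ T, x = aVert S ∨ x = bVert S := by
      rw [hTW, Finset.mem_union] at hx
      rcases hx with hx | hx
      · obtain ⟨S, hS, rfl⟩ := Finset.mem_image.mp hx; exact ⟨S, hS, Or.inl rfl⟩
      · obtain ⟨S, hS, rfl⟩ := Finset.mem_image.mp hx; exact ⟨S, hS, Or.inr rfl⟩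
    obtain ⟨S, hS, hxS⟩ := this
    obtain ⟨s, hs⟩ := hTne S hS
    have hmem : (x, (Sum.inl s : TigVertex α)) ∈ tigE T :=
      mem_tigE.mpr ⟨S, hS, s, hs, by simpa using hxS, rfl⟩
    obtain ⟨e, he, h1, _⟩ := hD.exists_edge hmem
    exact ⟨e, he, h1⟩
  set tok : TigVertex α → ((TigVertex α × TigVertex α) ⊕ (TigVertex α × TigVertex α)) :=
    fun x => if h : ∃ e, e ∈ E ∧ e.1 = x then Sum.inr h.choose
      else if h2 : ∃ t, (t, x) ∈ A then Sum.inl (h2.choose, x) else Sum.inl (x, x) with htok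
  have hmaps : ∀ x ∈ TW, tok x ∈ A.disjSum E := by
    intro x hx
    obtain ⟨e, he, hcl⟩ := serve x hx
    rw [htok]
    by_cases h : ∃ e, e ∈ E ∧ e.1 = x
    · simp only [dif_pos h]
      exact Finset.inr_mem_disjSum.mpr h.choose_spec.1
    · have hne : e.1 ≠ x := fun heq => h ⟨e, he, heq⟩
      have h2 : ∃ t, (t, x) ∈ A := reach_last_arc hcl.2 hne
      simp only [dif_neg h, dif_pos h2]
      exact Finset.inl_mem_disjSum.mpr h2.choose_spec
  have hinj : Set.InjOn tok TW := by
    intro x hx y hy heq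
    rw [htok] at heq
    by_cases h1 : ∃ e, e ∈ E ∧ e.1 = x <;> by_cases h2 : ∃ e, e ∈ E ∧ e.1 = y
    · simp only [dif_pos h1, dif_pos h2] at heq
      have := Sum.inr.inj heq
      rw [← h1.choose_spec.2, ← h2.choose_spec.2, this]
    · simp only [dif_pos h1, dif_neg h2] at heq
      split_ifs at heq <;> exact absurd heq (by simp)
    · simp only [dif_neg h1, dif_pos h2] at heq
      split_ifs at heq <;> exact absurd heq (by simp)
    · simp only [dif_neg h1, dif_neg h2] at heq
      split_ifs at heq <;>
        · have := Sum.inl.inj heq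
          exact congrArg Prod.snd this
  calc 2 * T.card = TW.card := hcard.symm
    _ ≤ (A.disjSum E).card := Finset.card_le_card_of_injOn tok hmaps hinj
    _ = A.card + E.card := Finset.card_disjSum _ _

end Chunk2

section Chunk3a
variable {α : Type*} [DecidableEq α]

lemma acyclic_of_rank {A : Finset (α × α)} (f : α → ℕ)
    (h : ∀ p ∈ A, f p.2 < f p.1) : ∀ v, ¬ Relation.TransGen (ArcRel A) v v := by
  have key : ∀ x y, Relation.TransGen (ArcRel A) x y → f y < f x := by
    intro x y hxy
    induction hxy with
    | single hb => exact h _ hb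
    | tail _ hb ih => exact lt_trans (h _ hb) ih
  intro v hv
  exact lt_irrefl _ (key v v hv)

lemma cluster_biUnion {Vb : Finset α} {A : Finset (α × α)} {v : α} (hv : v ∉ Vb)
    {W : Finset α} (hW : ∀ u, (v, u) ∈ A ↔ u ∈ W) :
    Cluster Vb A v = ⋃ w ∈ W, Cluster Vb A w := by
  ext u
  simp only [Set.mem_iUnion]
  constructor
  · intro hu
    rcases hu.2.cases_head with heq | ⟨c, hc1, hc2⟩
    · exact absurd (heq ▸ hu.1) hv
    · exact ⟨c, (hW c).mp hc1, hu.1, hc2⟩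
  · rintro ⟨w, hw, hu⟩
    exact cluster_mono_reach (Relation.ReflTransGen.single ((hW w).mpr hw)) hu

lemma sup_id_mem {S : Finset ℕ} (h : S.Nonempty) : S.sup id ∈ S := by
  have := S.max'_mem h
  rwa [Finset.max'_eq_sup', Finset.sup'_eq_sup h id] at this

/-- maximum of a finite set of naturals -/
def mxN (S : Finset ℕ) : ℕ := S.sup id

/-- S minus its maximum -/
def predN (S : Finset ℕ) : Finset ℕ := S.erase (mxN S)

lemma mxN_mem {S : Finset ℕ} (h : S.Nonempty) : mxN S ∈ S := sup_id_mem h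

lemma le_mxN {S : Finset ℕ} {x : ℕ} (h : x ∈ S) : x ≤ mxN S := Finset.le_sup (f := id) h

lemma predN_card {S : Finset ℕ} (h : S.Nonempty) : (predN S).card = S.card - 1 :=
  Finset.card_erase_of_mem (mxN_mem h)

lemma predN_nonempty {S : Finset ℕ} (h : 2 ≤ S.card) : (predN S).Nonempty := by
  have h1 : S.Nonempty := Finset.card_pos.mp (by omega)
  rw [← Finset.card_pos, predN_card h1]
  omega

lemma insert_mxN_predN {S : Finset ℕ} (h : S.Nonempty) : insert (mxN S) (predN S) = S :=
  Finset.insert_erase (mxN_mem h)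

lemma predN_subset {S : Finset ℕ} : predN S ⊆ S := Finset.erase_subset _ _

lemma mxN_not_mem_predN {S : Finset ℕ} : mxN S ∉ predN S := Finset.notMem_erase _ _

lemma card_eq_one_eq_singleton {S : Finset ℕ} (hne : S.Nonempty) (h : ¬ 2 ≤ S.card) :
    S = {mxN S} := by
  have : S.card = 1 := by
    have := Finset.card_pos.mpr hne; omega
  obtain ⟨j, hj⟩ := Finset.card_eq_one.mp this
  subst hj
  simp [mxN]

/-- The auxiliary internal node assigned to a set `S`. -/
def nodeOf (S : Finset ℕ) : TigVertex ℕ :=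
  if 2 ≤ S.card then aVert (insert 0 S) else Sum.inl (mxN S)

lemma nodeOf_inj {S S' : Finset ℕ} (h0 : 0 ∉ S) (h0' : 0 ∉ S')
    (hne : S.Nonempty) (hne' : S'.Nonempty) (h : nodeOf S = nodeOf S') : S = S' := by
  unfold nodeOf at h
  split_ifs at h with h1 h2 h2
  · have := aVert_inj h
    have : S = S' := by
      have e1 : (insert 0 S).erase 0 = (insert 0 S').erase 0 := by rw [this]
      rwa [Finset.erase_insert h0, Finset.erase_insert h0'] at e1
    exact this
  · exact absurd h aVert_ne_inl
  · exact absurd h.symm aVert_ne_inl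
  · have hj : mxN S = mxN S' := by simpa using h
    rw [card_eq_one_eq_singleton hne h1, card_eq_one_eq_singleton hne' h2, hj]

end Chunk3a
section MoreAux
lemma mxN_singleton (j : ℕ) : mxN ({j} : Finset ℕ) = j := by simp [mxN]

lemma image_insert_union {S : Finset ℕ} (h : S.Nonempty) :
    Sum.inl '' ((predN S : Set ℕ)) ∪ {Sum.inl (mxN S)} = (Sum.inl '' (S : Set ℕ) :
      Set (TigVertex ℕ)) := by
  ext x
  simp only [Set.mem_union, Set.mem_image, Set.mem_singleton_iff, Finset.mem_coe]
  constructor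
  · rintro (⟨j, hj, rfl⟩ | rfl)
    · exact ⟨j, predN_subset hj, rfl⟩
    · exact ⟨mxN S, mxN_mem h, rfl⟩
  · rintro ⟨j, hj, rfl⟩
    by_cases hje : j = mxN S
    · exact Or.inr (by rw [hje])
    · exact Or.inl ⟨j, Finset.mem_erase.mpr ⟨hje, hj⟩, rfl⟩
end MoreAux

section Chunk3b

lemma coe_sup_id (X : Finset (Finset ℕ)) {x : ℕ} : x ∈ X.sup id ↔ ∃ S ∈ X, x ∈ S := by
  simpa using Finset.mem_sup (s := X) (f := id) (b := x)

lemma trie_compression (U : Finset ℕ) (h0 : 0 ∉ U) (hUne : U.Nonempty)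
    (H X : Finset (Finset ℕ))
    (hHne : ∀ S ∈ H, S.Nonempty) (hHU : ∀ S ∈ H, S ⊆ U)
    (hpred : ∀ S ∈ H, 2 ≤ S.card → predN S ∈ H)
    (hUH : U ∉ H)
    (hXH : X ⊆ H) (hXcov : X.sup id = U) :
    ∃ (V : Finset (TigVertex ℕ)) (A E : Finset (TigVertex ℕ × TigVertex ℕ)),
      IsDagCompression (tigV U (insert U H)) (tigE (insert U H)) V A E ∧
      A.card + E.card =
        (2 * H.card + 2 * (H.filter fun S => 2 ≤ S.card).card) + (X.card + 2) := by
  classical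
  set H2 := H.filter (fun S => 2 ≤ S.card) with hH2def
  set Vbig := tigV U (insert U H) with hVbig
  set nu : Finset ℕ → TigVertex ℕ := fun S => aVert (insert 0 S) with hnu
  set cnode : TigVertex ℕ := bVert (insert 0 U) with hcnode
  set Atrie := (H2.biUnion fun S => {(nu S, nodeOf (predN S)), (nu S, Sum.inl (mxN S))})
      ∪ X.image (fun S => (cnode, nodeOf S)) with hAtrie
  set Etrie := (H.biUnion fun S => {(aVert S, nodeOf S), (bVert S, nodeOf S)})
      ∪ {(aVert U, cnode), (bVert U, cnode)} with hEtrie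
  set Vtrie := (Vbig ∪ H2.image nu) ∪ {cnode} with hVtrie
  -- basic facts
  have h0S : ∀ S ∈ H, (0 : ℕ) ∉ S := fun S hS h => h0 (hHU S hS h)
  have hnu_inj : ∀ S ∈ H, ∀ S' ∈ H, nu S = nu S' → S = S' := by
    intro S hS S' hS' h
    have h1 : insert 0 S = insert 0 S' := aVert_inj h
    have := congrArg (fun t => Finset.erase t 0) h1
    simpa [Finset.erase_insert (h0S S hS), Finset.erase_insert (h0S S' hS')] using this
  have hmemVbig : ∀ S', S' ∈ insert U H → S' ⊆ U := by
    intro S' hS'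
    rcases Finset.mem_insert.mp hS' with rfl | h
    · exact Finset.Subset.refl _
    · exact hHU _ h
  have hnu_not_vbig : ∀ S, nu S ∉ Vbig := by
    intro S h
    rcases mem_tigV.mp h with ⟨j, _, hj⟩ | ⟨S', hS', h' | h'⟩
    · exact aVert_ne_inl hj
    · have : insert 0 S = S' := aVert_inj h'
      exact h0 (hmemVbig S' hS' (this ▸ Finset.mem_insert_self 0 S))
    · exact aVert_ne_bVert h'
  have hcnode_not_vbig : cnode ∉ Vbig := by
    intro h
    rcases mem_tigV.mp h with ⟨j, _, hj⟩ | ⟨S', hS', h' | h'⟩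
    · exact bVert_ne_inl hj
    · exact aVert_ne_bVert h'.symm
    · have : insert 0 U = S' := bVert_inj h'
      exact h0 (hmemVbig S' hS' (this ▸ Finset.mem_insert_self 0 U))
  have hcnode_ne_nu : ∀ S, cnode ≠ nu S := fun S h => aVert_ne_bVert h.symm
  have hXne : X.Nonempty := by
    rcases Finset.eq_empty_or_nonempty X with rfl | h
    · exfalso; rw [Finset.sup_empty] at hXcov
      obtain ⟨u, hu⟩ := hUne
      rw [← hXcov] at hu
      exact absurd hu (Finset.notMem_empty u)
    · exact h
  -- arc membership characterisation
  have hAmem : ∀ p : TigVertex ℕ × TigVertex ℕ, p ∈ Atrie ↔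
      (∃ S ∈ H2, p = (nu S, nodeOf (predN S)) ∨ p = (nu S, Sum.inl (mxN S))) ∨
      ∃ S ∈ X, p = (cnode, nodeOf S) := by
    intro p
    simp only [hAtrie, Finset.mem_union, Finset.mem_biUnion, Finset.mem_insert,
      Finset.mem_singleton, Finset.mem_image]
    constructor
    · rintro (⟨S, hS, h⟩ | ⟨S, hS, h⟩)
      · exact Or.inl ⟨S, hS, h⟩
      · exact Or.inr ⟨S, hS, h.symm⟩
    · rintro (⟨S, hS, h⟩ | ⟨S, hS, h⟩)
      · exact Or.inl ⟨S, hS, h⟩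
      · exact Or.inr ⟨S, hS, h.symm⟩
  have hH2mem : ∀ S, S ∈ H2 ↔ S ∈ H ∧ 2 ≤ S.card := by
    intro S; simp [hH2def]
  -- out-arcs of nu S
  have hout_nu : ∀ S ∈ H2, ∀ u, ((nu S, u) ∈ Atrie ↔
      u ∈ ({nodeOf (predN S), Sum.inl (mxN S)} : Finset (TigVertex ℕ))) := by
    intro S hS u
    rw [hAmem]
    simp only [Finset.mem_insert, Finset.mem_singleton]
    constructor
    · rintro (⟨S', hS', h | h⟩ | ⟨S', hS', h⟩)
      · have heq : S = S' := hnu_inj S ((hH2mem S).mp hS).1 S' ((hH2mem S').mp hS').1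
          (congrArg Prod.fst h)
        subst heq; exact Or.inl (congrArg Prod.snd h)
      · have heq : S = S' := hnu_inj S ((hH2mem S).mp hS).1 S' ((hH2mem S').mp hS').1
          (congrArg Prod.fst h)
        subst heq; exact Or.inr (congrArg Prod.snd h)
      · exact absurd (congrArg Prod.fst h).symm (hcnode_ne_nu S)
    · rintro (rfl | rfl)
      · exact Or.inl ⟨S, hS, Or.inl rfl⟩
      · exact Or.inl ⟨S, hS, Or.inr rfl⟩
  -- out-arcs of cnode
  have hout_c : ∀ u, ((cnode, u) ∈ Atrie ↔ u ∈ X.image nodeOf) := by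
    intro u
    rw [hAmem]
    simp only [Finset.mem_image]
    constructor
    · rintro (⟨S', hS', h | h⟩ | ⟨S', hS', h⟩)
      · exact absurd (congrArg Prod.fst h) (hcnode_ne_nu S')
      · exact absurd (congrArg Prod.fst h) (hcnode_ne_nu S')
      · exact ⟨S', hS', (congrArg Prod.snd h).symm⟩
    · rintro ⟨S, hS, rfl⟩
      exact Or.inr ⟨S, hS, rfl⟩
  -- sinks of Vbig have no out-arcs
  have hsink_vbig : ∀ v ∈ Vbig, ∀ u, (v, u) ∉ Atrie := by
    intro v hv u hvu
    rcases (hAmem _).mp hvu with ⟨S, _, h | h⟩ | ⟨S, _, h⟩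
    · have hv2 : v = nu S := congrArg Prod.fst h
      exact hnu_not_vbig S (hv2 ▸ hv)
    · have hv2 : v = nu S := congrArg Prod.fst h
      exact hnu_not_vbig S (hv2 ▸ hv)
    · have hv2 : v = cnode := congrArg Prod.fst h
      exact hcnode_not_vbig (hv2 ▸ hv)
  have hinl_mem_vbig : ∀ j ∈ U, (Sum.inl j : TigVertex ℕ) ∈ Vbig :=
    fun j hj => mem_tigV.mpr (Or.inl ⟨j, hj, rfl⟩)
  have htwin_mem_vbig : ∀ S' ∈ insert U H, aVert S' ∈ Vbig ∧ bVert S' ∈ Vbig :=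
    fun S' h => ⟨mem_tigV.mpr (Or.inr ⟨S', h, Or.inl rfl⟩),
      mem_tigV.mpr (Or.inr ⟨S', h, Or.inr rfl⟩)⟩
  -- cluster of nodes
  have hclmain : ∀ m : ℕ, ∀ S ∈ H, S.card ≤ m →
      Cluster Vbig Atrie (nodeOf S) = Sum.inl '' (S : Set ℕ) := by
    intro m
    induction m with
    | zero =>
      intro S hS hc
      exact absurd (Finset.card_pos.mpr (hHne S hS)) (by omega)
    | succ m ih =>
      intro S hS hc
      by_cases h2 : 2 ≤ S.card
      · have hSpred : predN S ∈ H := hpred S hS h2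
        have hnode : nodeOf S = nu S := by rw [nodeOf, if_pos h2]
        have hcl : Cluster Vbig Atrie (nu S) =
            ⋃ w ∈ ({nodeOf (predN S), Sum.inl (mxN S)} : Finset (TigVertex ℕ)),
              Cluster Vbig Atrie w :=
          cluster_biUnion (hnu_not_vbig S) (hout_nu S ((hH2mem S).mpr ⟨hS, h2⟩))
        have hpc : (predN S).card ≤ m := by
          have := predN_card (hHne S hS); omega
        have hIH := ih (predN S) hSpred hpc
        have hmx : Cluster Vbig Atrie (Sum.inl (mxN S)) = {Sum.inl (mxN S)} :=
          cluster_of_sink (hinl_mem_vbig _ (hHU S hS (mxN_mem (hHne S hS))))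
            (hsink_vbig _ (hinl_mem_vbig _ (hHU S hS (mxN_mem (hHne S hS)))))
        rw [hnode, hcl]
        have : ⋃ w ∈ ({nodeOf (predN S), Sum.inl (mxN S)} : Finset (TigVertex ℕ)),
            Cluster Vbig Atrie w =
            Cluster Vbig Atrie (nodeOf (predN S)) ∪ Cluster Vbig Atrie (Sum.inl (mxN S)) := by
          simp [Set.iUnion_or, Set.iUnion_union_distrib]
        rw [this, hIH, hmx]
        exact image_insert_union (hHne S hS)
      · have hnode : nodeOf S = Sum.inl (mxN S) := by rw [nodeOf, if_neg h2]
        have hSsing := card_eq_one_eq_singleton (hHne S hS) h2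
        have hmxU : mxN S ∈ U := hHU S hS (mxN_mem (hHne S hS))
        rw [hnode, cluster_of_sink (hinl_mem_vbig _ hmxU)
          (hsink_vbig _ (hinl_mem_vbig _ hmxU))]
        rw [hSsing]
        rw [mxN_singleton]
        simp
  have hclS : ∀ S ∈ H, Cluster Vbig Atrie (nodeOf S) = Sum.inl '' (S : Set ℕ) :=
    fun S hS => hclmain S.card S hS le_rfl
  have hclC : Cluster Vbig Atrie cnode = Sum.inl '' (U : Set ℕ) := by
    rw [cluster_biUnion hcnode_not_vbig hout_c]
    ext x
    simp only [Finset.mem_image, Set.mem_iUnion, Set.mem_image]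
    constructor
    · rintro ⟨w, ⟨S, hS, rfl⟩, hx⟩
      rw [hclS S (hXH hS)] at hx
      obtain ⟨j, hj, rfl⟩ := hx
      exact ⟨j, by
        rw [← hXcov]
        exact (coe_sup_id X).mpr ⟨S, hS, hj⟩, rfl⟩
    · rintro ⟨j, hj, rfl⟩
      rw [← hXcov] at hj
      obtain ⟨S, hS, hjS⟩ := (coe_sup_id X).mp hj
      exact ⟨nodeOf S, ⟨S, hS, rfl⟩, by
        rw [hclS S (hXH hS)]
        exact ⟨j, hjS, rfl⟩⟩
  have hclsink : ∀ x ∈ Vbig, Cluster Vbig Atrie x = {x} :=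
    fun x hx => cluster_of_sink hx (hsink_vbig x hx)
  -- memberships of nodeOf in Vtrie
  have hnodeVtrie : ∀ S ∈ H, nodeOf S ∈ Vtrie := by
    intro S hS
    by_cases h2 : 2 ≤ S.card
    · rw [nodeOf, if_pos h2, hVtrie]
      exact Finset.mem_union_left _ (Finset.mem_union_right _
        (Finset.mem_image.mpr ⟨S, (hH2mem S).mpr ⟨hS, h2⟩, rfl⟩))
    · rw [nodeOf, if_neg h2, hVtrie]
      exact Finset.mem_union_left _ (Finset.mem_union_left _
        (hinl_mem_vbig _ (hHU S hS (mxN_mem (hHne S hS)))))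
  have hVbigVtrie : Vbig ⊆ Vtrie := fun v hv =>
    Finset.mem_union_left _ (Finset.mem_union_left _ hv)
  -- the compression
  refine ⟨Vtrie, Atrie, Etrie, ⟨hVbigVtrie, ?_, ?_, ?_, ?_, ?_⟩, ?_⟩
  · -- arcs_subset
    intro p hp
    rw [Finset.mem_product]
    rcases (hAmem p).mp hp with ⟨S, hS, h | h⟩ | ⟨S, hS, h⟩
    · subst h
      refine ⟨Finset.mem_union_left _ (Finset.mem_union_right _
        (Finset.mem_image.mpr ⟨S, hS, rfl⟩)), ?_⟩
      exact hnodeVtrie _ (hpred S ((hH2mem S).mp hS).1 ((hH2mem S).mp hS).2)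
    · subst h
      refine ⟨Finset.mem_union_left _ (Finset.mem_union_right _
        (Finset.mem_image.mpr ⟨S, hS, rfl⟩)), ?_⟩
      have hSH := ((hH2mem S).mp hS).1
      exact hVbigVtrie (hinl_mem_vbig _ (hHU S hSH (mxN_mem (hHne S hSH))))
    · subst h
      exact ⟨Finset.mem_union_right _ (Finset.mem_singleton_self _),
        hnodeVtrie _ (hXH hS)⟩
  · -- acyclic
    set rank : TigVertex ℕ → ℕ := Sum.elim (fun _ => 0)
      (fun p => if 0 ∈ p.1 then (if p.2 then p.1.card + 1 else p.1.card) else 0)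
      with hrank
    have hrank_inl : ∀ j : ℕ, rank (Sum.inl j) = 0 := fun j => rfl
    have hrank_nu : ∀ S : Finset ℕ, 0 ∉ S → rank (nu S) = S.card + 1 := by
      intro S h
      simp [hrank, hnu, aVert, Finset.card_insert_of_notMem h]
    have hrank_c : rank cnode = U.card + 2 := by
      simp [hrank, hcnode, bVert, Finset.card_insert_of_notMem h0]
    have hrank_node : ∀ S : Finset ℕ, 0 ∉ S → rank (nodeOf S) ≤ S.card + 1 := by
      intro S h
      rw [nodeOf]
      split_ifs with h2
      · rw [show aVert (insert 0 S) = nu S from rfl, hrank_nu S h]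
      · rw [hrank_inl]; omega
    apply acyclic_of_rank rank
    intro p hp
    rcases (hAmem p).mp hp with ⟨S, hS, h | h⟩ | ⟨S, hS, h⟩
    · subst h
      have hSH := ((hH2mem S).mp hS).1
      have h2 := ((hH2mem S).mp hS).2
      have hpred0 : (0 : ℕ) ∉ predN S := fun hh => h0S S hSH (predN_subset hh)
      have hle := hrank_node (predN S) hpred0
      have hpc := predN_card (hHne S hSH)
      simp only
      rw [hrank_nu S (h0S S hSH)]
      omega
    · subst h
      simp only
      rw [hrank_inl, hrank_nu S (h0S S ((hH2mem S).mp hS).1)]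
      omega
    · subst h
      have hSH := hXH hS
      have hle := hrank_node S (h0S S hSH)
      have hcard_le : S.card ≤ U.card := Finset.card_le_card (hHU S hSH)
      simp only
      rw [hrank_c]
      omega
  · -- sinks
    intro v hv
    constructor
    · intro hnoout
      rcases Finset.mem_union.mp hv with hv' | hv'
      · rcases Finset.mem_union.mp hv' with hv'' | hv''
        · exact hv''
        · obtain ⟨S, hS, rfl⟩ := Finset.mem_image.mp hv''
          exfalso
          exact hnoout (Sum.inl (mxN S)) ((hout_nu S hS (Sum.inl (mxN S))).mpr (by simp))
      · exfalso
        rw [Finset.mem_singleton] at hv'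
        subst hv'
        obtain ⟨S₀, hS₀⟩ := hXne
        exact hnoout _ ((hout_c _).mpr (Finset.mem_image.mpr ⟨S₀, hS₀, rfl⟩))
    · intro hvb
      exact hsink_vbig v hvb
  · -- edges_subset
    intro p hp
    rw [hEtrie] at hp
    rcases Finset.mem_union.mp hp with hp' | hp'
    · obtain ⟨S, hS, hp''⟩ := Finset.mem_biUnion.mp hp'
      rw [Finset.mem_product]
      rcases Finset.mem_insert.mp hp'' with rfl | hp3
      · exact ⟨hVbigVtrie (htwin_mem_vbig S (Finset.mem_insert_of_mem hS)).1,
          hnodeVtrie S hS⟩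
      · rw [Finset.mem_singleton] at hp3
        subst hp3
        exact ⟨hVbigVtrie (htwin_mem_vbig S (Finset.mem_insert_of_mem hS)).2,
          hnodeVtrie S hS⟩
    · rw [Finset.mem_product]
      rcases Finset.mem_insert.mp hp' with rfl | hp3
      · exact ⟨hVbigVtrie (htwin_mem_vbig U (Finset.mem_insert_self _ _)).1,
          Finset.mem_union_right _ (Finset.mem_singleton_self _)⟩
      · rw [Finset.mem_singleton] at hp3
        subst hp3
        exact ⟨hVbigVtrie (htwin_mem_vbig U (Finset.mem_insert_self _ _)).2,
          Finset.mem_union_right _ (Finset.mem_singleton_self _)⟩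
  · -- represents
    ext ⟨x, y⟩
    simp only [Set.mem_iUnion]
    constructor
    · intro h
      have h' : (x, y) ∈ tigE (insert U H) := by exact_mod_cast h
      obtain ⟨S', hS', s, hs, hx, hy⟩ := mem_tigE.mp h'
      rcases Finset.mem_insert.mp hS' with rfl | hSH
      · rcases hx with rfl | rfl
        · refine ⟨(aVert S', cnode), ?_, ?_⟩
          · rw [hEtrie]; exact Finset.mem_union_right _ (by simp)
          · rw [Set.mem_prod]
            constructor
            · rw [hclsink _ (htwin_mem_vbig S' (Finset.mem_insert_self _ _)).1]; rfl
            · rw [hclC, hy]; exact ⟨s, hs, rfl⟩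
        · refine ⟨(bVert S', cnode), ?_, ?_⟩
          · rw [hEtrie]; exact Finset.mem_union_right _ (by simp)
          · rw [Set.mem_prod]
            constructor
            · rw [hclsink _ (htwin_mem_vbig S' (Finset.mem_insert_self _ _)).2]; rfl
            · rw [hclC, hy]; exact ⟨s, hs, rfl⟩
      · rcases hx with rfl | rfl
        · refine ⟨(aVert S', nodeOf S'), ?_, ?_⟩
          · rw [hEtrie]
            exact Finset.mem_union_left _ (Finset.mem_biUnion.mpr ⟨S', hSH, by simp⟩)
          · rw [Set.mem_prod]
            constructor
            · rw [hclsink _ (htwin_mem_vbig S' (Finset.mem_insert_of_mem hSH)).1]; rfl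
            · rw [hclS S' hSH, hy]; exact ⟨s, hs, rfl⟩
        · refine ⟨(bVert S', nodeOf S'), ?_, ?_⟩
          · rw [hEtrie]
            exact Finset.mem_union_left _ (Finset.mem_biUnion.mpr ⟨S', hSH, by simp⟩)
          · rw [Set.mem_prod]
            constructor
            · rw [hclsink _ (htwin_mem_vbig S' (Finset.mem_insert_of_mem hSH)).2]; rfl
            · rw [hclS S' hSH, hy]; exact ⟨s, hs, rfl⟩
    · rintro ⟨e, he, hmem⟩
      rw [Set.mem_prod] at hmem
      have key : ∀ (S' : Finset ℕ), S' ∈ insert U H → ∀ w,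
          (w = aVert S' ∨ w = bVert S') →
          x ∈ Cluster Vbig Atrie w → y ∈ Sum.inl '' (S' : Set ℕ) →
          ((x, y) : TigVertex ℕ × TigVertex ℕ) ∈ (↑(tigE (insert U H)) :
            Set (TigVertex ℕ × TigVertex ℕ)) := by
        intro S' hS' w hw hxw hy
        have hwv : w ∈ Vbig := by
          rcases hw with rfl | rfl
          · exact (htwin_mem_vbig S' hS').1
          · exact (htwin_mem_vbig S' hS').2
        rw [hclsink w hwv] at hxw
        obtain ⟨s, hs, rfl⟩ := hy
        have : (x, Sum.inl s) ∈ tigE (insert U H) := by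
          apply mem_tigE.mpr
          exact ⟨S', hS', s, hs, by
            rw [hxw]
            rcases hw with rfl | rfl
            · exact Or.inl rfl
            · exact Or.inr rfl, rfl⟩
        exact_mod_cast this
      rw [hEtrie] at he
      rcases Finset.mem_union.mp he with he' | he'
      · obtain ⟨S, hS, he''⟩ := Finset.mem_biUnion.mp he'
        rcases Finset.mem_insert.mp he'' with rfl | he3
        · refine key S (Finset.mem_insert_of_mem hS) (aVert S) (Or.inl rfl) hmem.1 ?_
          rw [← hclS S hS]; exact hmem.2
        · rw [Finset.mem_singleton] at he3
          subst he3
          refine key S (Finset.mem_insert_of_mem hS) (bVert S) (Or.inr rfl) hmem.1 ?_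
          rw [← hclS S hS]; exact hmem.2
      · rcases Finset.mem_insert.mp he' with rfl | he3
        · refine key U (Finset.mem_insert_self _ _) (aVert U) (Or.inl rfl) hmem.1 ?_
          rw [← hclC]; exact hmem.2
        · rw [Finset.mem_singleton] at he3
          subst he3
          refine key U (Finset.mem_insert_self _ _) (bVert U) (Or.inr rfl) hmem.1 ?_
          rw [← hclC]; exact hmem.2
  · -- cardinalities
    have hEcard : Etrie.card = 2 * H.card + 2 := by
      rw [hEtrie]
      have hdisj : Disjoint (H.biUnion fun S => {(aVert S, nodeOf S), (bVert S, nodeOf S)})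
          ({(aVert U, cnode), (bVert U, cnode)} :
            Finset (TigVertex ℕ × TigVertex ℕ)) := by
        rw [Finset.disjoint_right]
        intro p hp hp'
        obtain ⟨S, hS, hp''⟩ := Finset.mem_biUnion.mp hp'
        have hfst : p.1 = aVert S ∨ p.1 = bVert S := by
          rcases Finset.mem_insert.mp hp'' with rfl | h3
          · exact Or.inl rfl
          · rw [Finset.mem_singleton] at h3; subst h3; exact Or.inr rfl
        have hfst' : p.1 = aVert U ∨ p.1 = bVert U := by
          rcases Finset.mem_insert.mp hp with rfl | h3
          · exact Or.inl rfl
          · rw [Finset.mem_singleton] at h3; subst h3; exact Or.inr rfl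
        have : S = U := by
          rcases hfst with h1 | h1 <;> rcases hfst' with h2 | h2 <;>
            rw [h1] at h2
          · exact aVert_inj h2
          · exact absurd h2 aVert_ne_bVert
          · exact absurd h2.symm aVert_ne_bVert
          · exact bVert_inj h2
        exact hUH (this ▸ hS)
      rw [Finset.card_union_of_disjoint hdisj]
      have h1 : (H.biUnion fun S => ({(aVert S, nodeOf S), (bVert S, nodeOf S)} :
            Finset (TigVertex ℕ × TigVertex ℕ))).card
          = 2 * H.card := by
        have hconst : ∀ S ∈ H, ({(aVert S, nodeOf S), (bVert S, nodeOf S)} :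
            Finset (TigVertex ℕ × TigVertex ℕ)).card = 2 := by
          intro S hS
          rw [Finset.card_insert_of_notMem, Finset.card_singleton]
          rw [Finset.mem_singleton]
          intro h
          exact aVert_ne_bVert (congrArg Prod.fst h)
        rw [Finset.card_biUnion, Finset.sum_congr rfl hconst, Finset.sum_const,
          smul_eq_mul]
        · ring
        · intro S hS S' hS' hne
          rw [Function.onFun, Finset.disjoint_left]
          intro p hp hp'
          have h1 : p.1 = aVert S ∨ p.1 = bVert S := by
            rcases Finset.mem_insert.mp hp with rfl | h3
            · exact Or.inl rfl
            · rw [Finset.mem_singleton] at h3; subst h3; exact Or.inr rfl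
          have h2 : p.1 = aVert S' ∨ p.1 = bVert S' := by
            rcases Finset.mem_insert.mp hp' with rfl | h3
            · exact Or.inl rfl
            · rw [Finset.mem_singleton] at h3; subst h3; exact Or.inr rfl
          apply hne
          rcases h1 with h1 | h1 <;> rcases h2 with h2 | h2 <;> rw [h1] at h2
          · exact aVert_inj h2
          · exact absurd h2 aVert_ne_bVert
          · exact absurd h2.symm aVert_ne_bVert
          · exact bVert_inj h2
      have h2 : ({(aVert U, cnode), (bVert U, cnode)} :
          Finset (TigVertex ℕ × TigVertex ℕ)).card = 2 := by
        rw [Finset.card_insert_of_notMem, Finset.card_singleton]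
        rw [Finset.mem_singleton]
        intro h
        exact aVert_ne_bVert (congrArg Prod.fst h)
      omega
    have hAcard : Atrie.card = 2 * H2.card + X.card := by
      rw [hAtrie]
      have hdisj : Disjoint
          (H2.biUnion fun S => {(nu S, nodeOf (predN S)), (nu S, Sum.inl (mxN S))})
          (X.image (fun S => (cnode, nodeOf S))) := by
        rw [Finset.disjoint_right]
        intro p hp hp'
        obtain ⟨S, hS, rfl⟩ := Finset.mem_image.mp hp
        obtain ⟨S', hS', hp''⟩ := Finset.mem_biUnion.mp hp'
        have : (cnode, nodeOf S).1 = nu S' := by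
          rcases Finset.mem_insert.mp hp'' with h3 | h3
          · rw [h3]
          · rw [Finset.mem_singleton] at h3; rw [h3]
        exact hcnode_ne_nu S' this
      rw [Finset.card_union_of_disjoint hdisj]
      have h1 : (H2.biUnion fun S =>
          ({(nu S, nodeOf (predN S)), (nu S, Sum.inl (mxN S))} :
            Finset (TigVertex ℕ × TigVertex ℕ))).card = 2 * H2.card := by
        have hconst : ∀ S ∈ H2, ({(nu S, nodeOf (predN S)), (nu S, Sum.inl (mxN S))} :
            Finset (TigVertex ℕ × TigVertex ℕ)).card = 2 := by
          intro S hS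
          rw [Finset.card_insert_of_notMem, Finset.card_singleton]
          rw [Finset.mem_singleton]
          intro h
          have hsnd : nodeOf (predN S) = Sum.inl (mxN S) := congrArg Prod.snd h
          have hSH := ((hH2mem S).mp hS).1
          have h2c := ((hH2mem S).mp hS).2
          rw [nodeOf] at hsnd
          split_ifs at hsnd with hc
          · exact aVert_ne_inl hsnd
          · have hmm : mxN (predN S) ∈ predN S :=
              mxN_mem (predN_nonempty h2c)
            have heq : mxN (predN S) = mxN S := by simpa using hsnd
            rw [heq] at hmm
            exact mxN_not_mem_predN hmm
        rw [Finset.card_biUnion, Finset.sum_congr rfl hconst, Finset.sum_const,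
          smul_eq_mul]
        · ring
        · intro S hS S' hS' hne
          rw [Function.onFun, Finset.disjoint_left]
          intro p hp hp'
          have h1 : p.1 = nu S := by
            rcases Finset.mem_insert.mp hp with rfl | h3
            · rfl
            · rw [Finset.mem_singleton] at h3; subst h3; rfl
          have h2 : p.1 = nu S' := by
            rcases Finset.mem_insert.mp hp' with rfl | h3
            · rfl
            · rw [Finset.mem_singleton] at h3; subst h3; rfl
          exact hne (hnu_inj S ((hH2mem S).mp hS).1 S' ((hH2mem S').mp hS').1
            (h1 ▸ h2))
      have h2 : (X.image (fun S => (cnode, nodeOf S))).card = X.card := by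
        rw [Finset.card_image_of_injOn]
        intro S hS S' hS' h
        have := congrArg Prod.snd h
        simp only at this
        exact nodeOf_inj (h0S S (hXH hS)) (h0S S' (hXH hS'))
          (hHne S (hXH hS)) (hHne S' (hXH hS')) this
      omega
    rw [hAcard, hEcard]
    ring

end Chunk3b

section CountHelpers
variable {β : Type*} [DecidableEq β]

lemma reach_last_arc' {r : β → β → Prop} {u x : β}
    (h : Relation.ReflTransGen r u x) (hne : u ≠ x) :
    ∃ t, Relation.ReflTransGen r u t ∧ r t x := by
  cases h.cases_tail with
  | inl h => exact absurd h.symm hne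
  | inr h => exact h

lemma card_add_one_le {s t : Finset β} (h : s ⊆ t) {a : β}
    (ha : a ∈ t) (hna : a ∉ s) : s.card + 1 ≤ t.card := by
  have hsub : insert a s ⊆ t := Finset.insert_subset ha h
  have hc : (insert a s).card = s.card + 1 := Finset.card_insert_of_notMem hna
  calc s.card + 1 = (insert a s).card := hc.symm
    _ ≤ t.card := Finset.card_le_card hsub

lemma card_add_two_le {s t : Finset β} (h : s ⊆ t) {a b : β}
    (ha : a ∈ t) (hb : b ∈ t) (hna : a ∉ s) (hnb : b ∉ s) (hab : a ≠ b) :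
    s.card + 2 ≤ t.card := by
  have hsub : insert a (insert b s) ⊆ t :=
    Finset.insert_subset ha (Finset.insert_subset hb h)
  have hc : (insert a (insert b s)).card = s.card + 2 := by
    rw [Finset.card_insert_of_notMem, Finset.card_insert_of_notMem hnb]
    simp only [Finset.mem_insert, not_or]
    exact ⟨hab, hna⟩
  calc s.card + 2 = (insert a (insert b s)).card := hc.symm
    _ ≤ t.card := Finset.card_le_card hsub

lemma card_two_disjoint {s1 s2 t : Finset β} (h1 : s1 ⊆ t) (h2 : s2 ⊆ t)
    (d12 : ∀ x, x ∈ s1 → x ∈ s2 → False) :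
    s1.card + s2.card ≤ t.card := by
  have hd : Disjoint s1 s2 := Finset.disjoint_left.mpr (fun {x} hx1 hx2 => d12 x hx1 hx2)
  calc s1.card + s2.card = (s1 ∪ s2).card := (Finset.card_union_of_disjoint hd).symm
    _ ≤ t.card := Finset.card_le_card (Finset.union_subset h1 h2)

lemma card_three_disjoint {s1 s2 s3 t : Finset β} (h1 : s1 ⊆ t) (h2 : s2 ⊆ t)
    (h3 : s3 ⊆ t) (d12 : ∀ x, x ∈ s1 → x ∈ s2 → False)
    (d13 : ∀ x, x ∈ s1 → x ∈ s3 → False) (d23 : ∀ x, x ∈ s2 → x ∈ s3 → False) :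
    s1.card + s2.card + s3.card ≤ t.card := by
  have hd12 : Disjoint s1 s2 := Finset.disjoint_left.mpr (fun {x} hx1 hx2 => d12 x hx1 hx2)
  have hd3 : Disjoint (s1 ∪ s2) s3 := by
    rw [Finset.disjoint_left]
    intro x hx hx3
    rcases Finset.mem_union.mp hx with hx1 | hx2
    · exact d13 x hx1 hx3
    · exact d23 x hx2 hx3
  calc s1.card + s2.card + s3.card = (s1 ∪ s2).card + s3.card := by
        rw [Finset.card_union_of_disjoint hd12]
    _ = ((s1 ∪ s2) ∪ s3).card := (Finset.card_union_of_disjoint hd3).symm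
    _ ≤ t.card := Finset.card_le_card
        (Finset.union_subset (Finset.union_subset h1 h2) h3)

end CountHelpers

section Chunk4

open Relation

lemma excision (U : Finset ℕ) (F' : Finset (Finset ℕ)) (M : Finset ℕ)
    (G : Finset (Finset ℕ))
    (hM : M ∉ F') (hMne : M.Nonempty) (hMU : M ⊆ U)
    (hF'U : ∀ S ∈ F', S ⊆ U)
    (hcovS : ∀ S ∈ F', ∃ g ∈ G, S ⊆ g)
    (hnoG : ∀ g ∈ G, ¬ M ⊆ g)
    (hUG : ∀ j ∈ U, ∃ g ∈ G, j ∈ g)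
    {V : Finset (TigVertex ℕ)} {A E : Finset (TigVertex ℕ × TigVertex ℕ)}
    (hD : IsDagCompression (tigV U (insert M F')) (tigE (insert M F')) V A E) :
    ∃ (V₀ : Finset (TigVertex ℕ)) (A₀ E₀ : Finset (TigVertex ℕ × TigVertex ℕ))
      (X : Finset (Finset ℕ)),
      IsDagCompression (tigV U F') (tigE F') V₀ A₀ E₀ ∧ X ⊆ G ∧
      (∀ j ∈ M, ∃ g ∈ X, j ∈ g) ∧
      A₀.card + E₀.card + (X.card + 2) ≤ A.card + E.card := by
  classical
  set Vbp := tigV U (insert M F') with hVbp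
  set Vb0 := tigV U F' with hVb0
  set C : TigVertex ℕ → Set (TigVertex ℕ) := Cluster Vbp A with hC
  set C0 : TigVertex ℕ → Set (TigVertex ℕ) := Cluster Vb0 A with hC0
  set aM : TigVertex ℕ := aVert M with haM
  set bM : TigVertex ℕ := bVert M with hbM
  -- P1
  have haMnot : aM ∉ Vb0 := by
    intro h
    rcases mem_tigV.mp h with ⟨j, _, hj⟩ | ⟨S, hS, h' | h'⟩
    · exact aVert_ne_inl hj
    · exact hM (aVert_inj h' ▸ hS)
    · exact aVert_ne_bVert h'
  have hbMnot : bM ∉ Vb0 := by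
    intro h
    rcases mem_tigV.mp h with ⟨j, _, hj⟩ | ⟨S, hS, h' | h'⟩
    · exact bVert_ne_inl hj
    · exact aVert_ne_bVert h'.symm
    · exact hM (bVert_inj h' ▸ hS)
  have hVb0sub : Vb0 ⊆ Vbp := by
    intro v hv
    rcases mem_tigV.mp hv with ⟨j, hj, h⟩ | ⟨S, hS, h⟩
    · exact mem_tigV.mpr (Or.inl ⟨j, hj, h⟩)
    · exact mem_tigV.mpr (Or.inr ⟨S, Finset.mem_insert_of_mem hS, h⟩)
  have haMVbp : aM ∈ Vbp := mem_tigV.mpr (Or.inr ⟨M, Finset.mem_insert_self _ _, Or.inl rfl⟩)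
  have hbMVbp : bM ∈ Vbp := mem_tigV.mpr (Or.inr ⟨M, Finset.mem_insert_self _ _, Or.inr rfl⟩)
  -- P3 : C0 v = C v minus the two twins of M
  have hC0C : ∀ v, C0 v = C v \ {aM, bM} := by
    intro v
    ext u
    simp only [hC0, hC, Cluster, Set.mem_diff, Set.mem_setOf_eq, Set.mem_insert_iff,
      Set.mem_singleton_iff]
    constructor
    · intro hu
      have huVbp : u ∈ Vbp := hVb0sub hu.1
      refine ⟨⟨huVbp, hu.2⟩, ?_⟩
      rintro (rfl | rfl)
      case _ => exact haMnot hu.1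
      case _ => exact hbMnot hu.1
    · rintro ⟨⟨huVbp, hr⟩, hne⟩
      refine ⟨?_, hr⟩
      rcases mem_tigV.mp huVbp with ⟨j, hj, h⟩ | ⟨S, hS, h⟩
      · exact mem_tigV.mpr (Or.inl ⟨j, hj, h⟩)
      · rcases Finset.mem_insert.mp hS with rfl | hS'
        · exfalso
          rcases h with h | h
          · exact hne (Or.inl (by rw [h, haM]))
          · exact hne (Or.inr (by rw [h, hbM]))
        · exact mem_tigV.mpr (Or.inr ⟨S, hS', h⟩)
  have hC0sub : ∀ v, C0 v ⊆ C v := by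
    intro v; rw [hC0C]; exact Set.diff_subset
  -- cluster of the M twins
  have hCaM : C aM = {aM} := hD.cluster_vbar haMVbp
  have hCbM : C bM = {bM} := hD.cluster_vbar hbMVbp
  have hCsing : ∀ v, v ∈ Vbp → C v = {v} := fun v hv => hD.cluster_vbar hv
  have haMdead : C0 aM = ∅ := by
    rw [hC0C, hCaM]
    ext u
    simp only [Set.mem_diff, Set.mem_singleton_iff, Set.mem_insert_iff,
      Set.mem_empty_iff_false, iff_false, not_and, not_not]
    rintro rfl
    exact Or.inl rfl
  have hbMdead : C0 bM = ∅ := by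
    rw [hC0C, hCbM]
    ext u
    simp only [Set.mem_diff, Set.mem_singleton_iff, Set.mem_insert_iff,
      Set.mem_empty_iff_false, iff_false, not_and, not_not]
    rintro rfl
    exact Or.inr rfl
  -- P6: no inl in source clusters of edges with nonempty target cluster
  have hP6 : ∀ e ∈ E, (C e.2).Nonempty → ∀ j : ℕ, Sum.inl j ∉ C e.1 := by
    intro e he ⟨y, hy⟩ j hj
    have := hD.pair_mem he hj hy
    obtain ⟨S, _, s, _, hx, _⟩ := mem_tigE.mp this
    rcases hx with hx | hx
    · exact aVert_ne_inl hx.symm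
    · exact bVert_ne_inl hx.symm
  -- P8: targets lie in the sets of source twins
  have hP8 : ∀ e ∈ E, ∀ S : Finset ℕ, (aVert S ∈ C e.1 ∨ bVert S ∈ C e.1) →
      ∀ y ∈ C e.2, ∃ s ∈ S, y = Sum.inl s := by
    intro e he S hx y hy
    rcases hx with hx | hx
    · obtain ⟨S', _, s, hs, hx', hy'⟩ := mem_tigE.mp (hD.pair_mem he hx hy)
      rcases hx' with hx' | hx'
      · exact ⟨s, aVert_inj hx' ▸ hs, hy'⟩
      · exact absurd hx' aVert_ne_bVert
    · obtain ⟨S', _, s, hs, hx', hy'⟩ := mem_tigE.mp (hD.pair_mem he hx hy)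
      rcases hx' with hx' | hx'
      · exact absurd hx'.symm aVert_ne_bVert
      · exact ⟨s, bVert_inj hx' ▸ hs, hy'⟩
  -- source twins are twins of some set
  have hP7 : ∀ e ∈ E, (C e.2).Nonempty → ∀ x ∈ C e.1,
      ∃ S ∈ insert M F', x = aVert S ∨ x = bVert S := by
    intro e he ⟨y, hy⟩ x hx
    obtain ⟨S, hS, s, _, hx', _⟩ := mem_tigE.mp (hD.pair_mem he hx hy)
    exact ⟨S, hS, hx'⟩
  -- members of C0 of sources are twins of F' sets
  have hP7' : ∀ e ∈ E, (C e.2).Nonempty → ∀ x ∈ C0 e.1,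
      ∃ S ∈ F', x = aVert S ∨ x = bVert S := by
    intro e he hne x hx
    obtain ⟨S, hS, hx'⟩ := hP7 e he hne x (hC0sub _ hx)
    rcases Finset.mem_insert.mp hS with rfl | hS'
    · exfalso
      rw [hC0C] at hx
      rcases hx' with hx' | hx'
      · exact hx.2 (Or.inl (by rw [hx', haM]))
      · exact hx.2 (Or.inr (by rw [hx', hbM]; exact rfl))
    · exact ⟨S, hS', hx'⟩
  -- Alive and Kept
  set Alv : TigVertex ℕ → Prop := fun v => (C0 v).Nonempty with hAlv
  have hAlv_mono : ∀ {v w}, Relation.ReflTransGen (ArcRel A) v w → Alv w → Alv v := by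
    intro v w h hw
    obtain ⟨u, hu⟩ := hw
    exact ⟨u, cluster_mono_reach h hu⟩
  set E0 := E.filter (fun e => (C0 e.1).Nonempty ∧ (C0 e.2).Nonempty) with hE0
  set Seed : TigVertex ℕ → Prop :=
    fun v => v ∈ Vb0 ∨ ∃ e ∈ E0, e.1 = v ∨ e.2 = v with hSeed
  set Kept : TigVertex ℕ → Prop :=
    fun v => Alv v ∧ ∃ s, Seed s ∧ Relation.ReflTransGen (ArcRel A) s v with hKept
  have hVb0alive : ∀ v ∈ Vb0, Alv v := by
    intro v hv
    exact ⟨v, ⟨hv, Relation.ReflTransGen.refl⟩⟩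
  have hSeed_alive : ∀ s, Seed s → Alv s := by
    intro s hs
    rcases hs with hs | ⟨e, he, h | h⟩
    · exact hVb0alive s hs
    · exact h ▸ (Finset.mem_filter.mp he).2.1
    · exact h ▸ (Finset.mem_filter.mp he).2.2
  have hKept_of : ∀ {v w}, Kept v → Relation.ReflTransGen (ArcRel A) v w → Alv w → Kept w := by
    rintro v w ⟨_, s, hs, hr⟩ hvw hw
    exact ⟨hw, s, hs, hr.trans hvw⟩
  have hKept_seed : ∀ s, Seed s → Kept s :=
    fun s hs => ⟨hSeed_alive s hs, s, hs, Relation.ReflTransGen.refl⟩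
  set V0 := V.filter Kept with hV0
  set A0 := A.filter (fun p => Kept p.1 ∧ Alv p.2) with hA0
  -- reachability is preserved towards alive vertices
  have hreach0 : ∀ {v w}, Kept v → Relation.ReflTransGen (ArcRel A) v w → Alv w →
      Relation.ReflTransGen (ArcRel A0) v w := by
    intro v w hv hvw hw
    induction hvw with
    | refl => exact Relation.ReflTransGen.refl
    | @tail b c hab hbc ih =>
      have hAb : Alv b := hAlv_mono (Relation.ReflTransGen.single hbc) hw
      have hKb : Kept b := hKept_of hv (by assumption) hAb
      refine (ih hAb).tail ?_
      show (b, c) ∈ A0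
      rw [hA0, Finset.mem_filter]
      exact ⟨hbc, hKb, hw⟩
  -- cluster preservation
  have hCL : ∀ v, Kept v → Cluster Vb0 A0 v = C0 v := by
    intro v hv
    ext u
    constructor
    · intro hu
      refine ⟨hu.1, ?_⟩
      exact Relation.ReflTransGen.mono (fun x y h => (Finset.mem_filter.mp h).1) _ _ hu.2
    · intro hu
      refine ⟨hu.1, ?_⟩
      exact hreach0 hv hu.2 (hVb0alive u hu.1)
  -- the reduced compression
  have hVb0V : Vb0 ⊆ V := fun v hv => hD.vbar_subset (hVb0sub hv)
  have hcomp0 : IsDagCompression Vb0 (tigE F') V0 A0 E0 := by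
    constructor
    · intro v hv
      rw [hV0, Finset.mem_filter]
      exact ⟨hVb0V hv, hKept_seed v (Or.inl hv)⟩
    · intro p hp
      rw [hA0, Finset.mem_filter] at hp
      obtain ⟨hpA, hk1, hal2⟩ := hp
      rw [Finset.mem_product]
      have hpV := Finset.mem_product.mp (hD.arcs_subset hpA)
      constructor
      · rw [hV0, Finset.mem_filter]; exact ⟨hpV.1, hk1⟩
      · rw [hV0, Finset.mem_filter]
        exact ⟨hpV.2, hKept_of hk1 (Relation.ReflTransGen.single hpA) hal2⟩
    · intro v hv
      exact hD.acyclic v (Relation.TransGen.mono (fun x y h => (Finset.mem_filter.mp h).1) _ _ hv)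
    · intro v hv
      rw [hV0, Finset.mem_filter] at hv
      constructor
      · intro hnoout
        obtain ⟨hal, -⟩ := hv.2
        obtain ⟨u, hu⟩ := hal
        rcases hu.2.cases_head with heq | ⟨c, hc1, hc2⟩
        · exact heq ▸ hu.1
        · exfalso
          have hAlc : Alv c := hAlv_mono hc2 (hVb0alive u hu.1)
          exact hnoout c (by
            rw [hA0, Finset.mem_filter]
            exact ⟨hc1, hv.2, hAlc⟩)
      · intro hvb u hu
        rw [hA0, Finset.mem_filter] at hu
        exact hD.sink_of_vbar (hVb0sub hvb) u hu.1
    · intro e he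
      rw [hE0, Finset.mem_filter] at he
      rw [Finset.mem_product]
      have heV := Finset.mem_product.mp (hD.edges_subset he.1)
      constructor
      · rw [hV0, Finset.mem_filter]
        exact ⟨heV.1, hKept_seed _ (Or.inr ⟨e, Finset.mem_filter.mpr he, Or.inl rfl⟩)⟩
      · rw [hV0, Finset.mem_filter]
        exact ⟨heV.2, hKept_seed _ (Or.inr ⟨e, Finset.mem_filter.mpr he, Or.inr rfl⟩)⟩
    · -- represents
      ext ⟨x, y⟩
      simp only [Set.mem_iUnion]
      constructor
      · intro h
        have h' : (x, y) ∈ tigE F' := by exact_mod_cast h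
        obtain ⟨S, hS, s, hs, hx, hy⟩ := mem_tigE.mp h'
        have h'' : (x, y) ∈ tigE (insert M F') := by
          apply mem_tigE.mpr
          exact ⟨S, Finset.mem_insert_of_mem hS, s, hs, hx, hy⟩
        obtain ⟨e, he, hxe, hye⟩ := hD.exists_edge h''
        have hxVb0 : x ∈ Vb0 := by
          rcases hx with rfl | rfl
          · exact mem_tigV.mpr (Or.inr ⟨S, hS, Or.inl rfl⟩)
          · exact mem_tigV.mpr (Or.inr ⟨S, hS, Or.inr rfl⟩)
        have hyVb0 : y ∈ Vb0 := by
          have hy' : y = Sum.inl s := hy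
          rw [hy']
          exact mem_tigV.mpr (Or.inl ⟨s, hF'U S hS hs, rfl⟩)
        have hx0 : x ∈ C0 e.1 := ⟨hxVb0, hxe.2⟩
        have hy0 : y ∈ C0 e.2 := ⟨hyVb0, hye.2⟩
        have heE0 : e ∈ E0 := by
          rw [hE0, Finset.mem_filter]
          exact ⟨he, ⟨x, hx0⟩, ⟨y, hy0⟩⟩
        refine ⟨e, heE0, ?_⟩
        rw [Set.mem_prod]
        have hk1 : Kept e.1 := hKept_seed _ (Or.inr ⟨e, heE0, Or.inl rfl⟩)
        have hk2 : Kept e.2 := hKept_seed _ (Or.inr ⟨e, heE0, Or.inr rfl⟩)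
        rw [hCL _ hk1, hCL _ hk2]
        exact ⟨hx0, hy0⟩
      · rintro ⟨e, he, hmem⟩
        rw [Set.mem_prod] at hmem
        have hk1 : Kept e.1 := hKept_seed _ (Or.inr ⟨e, he, Or.inl rfl⟩)
        have hk2 : Kept e.2 := hKept_seed _ (Or.inr ⟨e, he, Or.inr rfl⟩)
        rw [hCL _ hk1] at hmem
        rw [hCL _ hk2] at hmem
        have heE : e ∈ E := (Finset.mem_filter.mp he).1
        have hpair := hD.pair_mem heE (hC0sub _ hmem.1) (hC0sub _ hmem.2)
        obtain ⟨S, hS, s, hs, hx, hy⟩ := mem_tigE.mp hpair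
        rcases Finset.mem_insert.mp hS with rfl | hS'
        · exfalso
          rw [hC0C] at hmem
          rcases hx with hx | hx
          · exact hmem.1.2 (Or.inl (by rw [hx, haM]))
          · exact hmem.1.2 (Or.inr (by rw [hx, hbM]; exact rfl))
        · have : (x, y) ∈ tigE F' := mem_tigE.mpr ⟨S, hS', s, hs, hx, hy⟩
          exact_mod_cast this
  -- counting : to be continued
  have hcount : ∃ X : Finset (Finset ℕ), X ⊆ G ∧ (∀ j ∈ M, ∃ g ∈ X, j ∈ g) ∧
      A0.card + E0.card + (X.card + 2) ≤ A.card + E.card := by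
    have hGne : G.Nonempty := by
      obtain ⟨j, hj⟩ := hMne
      obtain ⟨g, hg, -⟩ := hUG j (hMU hj)
      exact ⟨g, hg⟩
    set g0 := hGne.choose with hg0def
    have hg0 : g0 ∈ G := hGne.choose_spec
    set chG : (Finset ℕ → Prop) → Finset ℕ :=
      fun P => if h : ∃ g ∈ G, P g then h.choose else g0 with hchG
    have chG_mem : ∀ P : Finset ℕ → Prop, chG P ∈ G := by
      intro P
      rw [hchG]
      dsimp only
      split_ifs with h
      · exact h.choose_spec.1
      · exact hg0
    have chG_spec : ∀ P : Finset ℕ → Prop, (∃ g ∈ G, P g) → P (chG P) := by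
      intro P h
      rw [hchG]
      dsimp only
      rw [dif_pos h]
      exact h.choose_spec.2
    set legit : TigVertex ℕ → Prop :=
      fun v => ∃ g ∈ G, ∀ u ∈ C v, ∃ j ∈ g, u = Sum.inl j with hlegit
    set Wd : TigVertex ℕ → Prop :=
      fun v => Alv v ∧ (∀ u ∈ C v, ∃ j : ℕ, u = Sum.inl j) ∧ ¬ legit v with hWd
    set R1 := E.filter (fun e => (C e.1).Nonempty ∧ ¬ Alv e.1) with hR1
    set R2 := A.filter (fun p => ¬ Alv p.2) with hR2
    set R3 := A.filter (fun p => Wd p.1 ∧ Alv p.2) with hR3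
    set R1L : TigVertex ℕ → Finset (TigVertex ℕ × TigVertex ℕ) :=
      fun y => R1.filter (fun e => y ∈ C e.1 ∧ legit e.2) with hR1L
    set Ty : TigVertex ℕ → Finset (TigVertex ℕ × TigVertex ℕ) :=
      fun y => R2.filter (fun p => Alv p.1 ∧ y ∈ C p.2) with hTy
    have htwinfacts : ∀ y : TigVertex ℕ, y = aM ∨ y = bM →
        y ∈ Vbp ∧ C y = {y} ∧ ¬ Alv y := by
      rintro y (rfl | rfl)
      · refine ⟨haMVbp, hCaM, ?_⟩
        intro h
        apply Set.not_nonempty_empty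
        rw [← haMdead]
        exact h
      · refine ⟨hbMVbp, hCbM, ?_⟩
        intro h
        apply Set.not_nonempty_empty
        rw [← hbMdead]
        exact h
    have haMbM : aM ≠ bM := by
      rw [haM, hbM]; exact aVert_ne_bVert
    have hserve : ∀ y : TigVertex ℕ, y = aM ∨ y = bM → ∀ j ∈ M,
        ∃ e ∈ E, y ∈ C e.1 ∧ Sum.inl j ∈ C e.2 := by
      intro y hy j hj
      have hedge : (y, (Sum.inl j : TigVertex ℕ)) ∈ tigE (insert M F') := by
        apply mem_tigE.mpr
        refine ⟨M, Finset.mem_insert_self _ _, j, hj, ?_, rfl⟩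
        rcases hy with rfl | rfl
        · exact Or.inl haM
        · exact Or.inr hbM
      exact hD.exists_edge hedge
    have hdead_mono : ∀ {v w : TigVertex ℕ}, ¬ Alv v →
        Relation.ReflTransGen (ArcRel A) v w → ¬ Alv w :=
      fun hv hr hw => hv (hAlv_mono hr hw)
    -- W and Kept are disjoint
    have hWK : ∀ v, Wd v → ¬ Kept v := by
      intro v hWv hKv
      obtain ⟨hAv, hinl, hnl⟩ := hWv
      obtain ⟨-, s, hs, hr⟩ := hKv
      have hsub : C v ⊆ C s := cluster_mono_reach hr
      rcases hs with hsV | ⟨e, heE0, he1 | he2⟩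
      · rcases mem_tigV.mp hsV with ⟨j, hjU, rfl⟩ | ⟨S, hSF, hts⟩
        · apply hnl
          obtain ⟨g, hg, hjg⟩ := hUG j hjU
          refine ⟨g, hg, ?_⟩
          intro u hu
          have hus := hsub hu
          rw [hCsing _ (hVb0sub hsV)] at hus
          exact ⟨j, hjg, hus⟩
        · obtain ⟨u0, hu0⟩ := hAv
          have hu0' : u0 ∈ C s := hsub (hC0sub v hu0)
          rw [hCsing _ (hVb0sub hsV)] at hu0'
          obtain ⟨j, hj⟩ := hinl u0 (hC0sub v hu0)
          rcases hts with hts | hts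
          · exact aVert_ne_inl (S := S) (j := j) (by rw [← hts, ← hu0']; exact hj)
          · exact bVert_ne_inl (S := S) (j := j) (by rw [← hts, ← hu0']; exact hj)
      · have he' := Finset.mem_filter.mp heE0
        have hCe2 : (C e.2).Nonempty := by
          obtain ⟨w0, hw0⟩ := he'.2.2
          exact ⟨w0, hC0sub _ hw0⟩
        obtain ⟨u0, hu0⟩ := hAv
        obtain ⟨j, hj⟩ := hinl u0 (hC0sub v hu0)
        have hu0s : u0 ∈ C s := hsub (hC0sub v hu0)
        rw [← he1] at hu0s
        rw [hj] at hu0s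
        exact hP6 e he'.1 hCe2 j hu0s
      · have he' := Finset.mem_filter.mp heE0
        have hCe2 : (C e.2).Nonempty := by
          obtain ⟨w0, hw0⟩ := he'.2.2
          exact ⟨w0, hC0sub _ hw0⟩
        obtain ⟨x0, hx0⟩ := he'.2.1
        obtain ⟨S, hSF, hxS⟩ := hP7' e he'.1 hCe2 x0 hx0
        obtain ⟨g, hg, hSg⟩ := hcovS S hSF
        apply hnl
        refine ⟨g, hg, ?_⟩
        intro u hu
        have hue2 : u ∈ C e.2 := by
          have h3 := hsub hu
          rw [← he2] at h3
          exact h3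
        have htwin : aVert S ∈ C e.1 ∨ bVert S ∈ C e.1 := by
          rcases hxS with h | h
          · exact Or.inl (h ▸ hC0sub _ hx0)
          · exact Or.inr (h ▸ hC0sub _ hx0)
        obtain ⟨s', hs', heq⟩ := hP8 e he'.1 S htwin u hue2
        exact ⟨s', hSg hs', heq⟩
    -- splitting inequalities
    have hE_split : E0.card + R1.card ≤ E.card := by
      apply card_two_disjoint (Finset.filter_subset _ _) (Finset.filter_subset _ _)
      intro x hx1 hx2
      have h1 := (Finset.mem_filter.mp hx1).2.1
      have h2 := (Finset.mem_filter.mp hx2).2.2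
      exact h2 h1
    have hA_split : A0.card + R2.card + R3.card ≤ A.card := by
      apply card_three_disjoint (Finset.filter_subset _ _) (Finset.filter_subset _ _)
        (Finset.filter_subset _ _)
      · intro x hx1 hx2
        exact (Finset.mem_filter.mp hx2).2 (Finset.mem_filter.mp hx1).2.2
      · intro x hx1 hx2
        exact hWK _ (Finset.mem_filter.mp hx2).2.1 (Finset.mem_filter.mp hx1).2.1
      · intro x hx1 hx2
        exact (Finset.mem_filter.mp hx1).2 (Finset.mem_filter.mp hx2).2.2
    -- pieces
    have hpieces : ∀ y : TigVertex ℕ, y = aM ∨ y = bM →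
        ∃ X : Finset (Finset ℕ), X ⊆ G ∧ (∀ j ∈ M, ∃ g ∈ X, j ∈ g) ∧
          X.card ≤ (R1L y).card + (Ty y).card + R3.card := by
      intro y hy
      set fE : TigVertex ℕ × TigVertex ℕ → Finset ℕ :=
        fun e => chG (fun g => ∀ u ∈ C e.2, ∃ j ∈ g, u = Sum.inl j) with hfE
      set fT : TigVertex ℕ × TigVertex ℕ → Finset ℕ :=
        fun p => chG (fun g => ∃ S ∈ F', S ⊆ g ∧
          (aVert S ∈ C0 p.1 ∨ bVert S ∈ C0 p.1)) with hfT
      refine ⟨(R1L y).image fE ∪ (Ty y).image fT ∪ R3.image fE, ?_, ?_, ?_⟩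
      · intro g hg
        rcases Finset.mem_union.mp hg with hg' | hg'
        · rcases Finset.mem_union.mp hg' with hg'' | hg''
          · obtain ⟨e, -, rfl⟩ := Finset.mem_image.mp hg''; exact chG_mem _
          · obtain ⟨p, -, rfl⟩ := Finset.mem_image.mp hg''; exact chG_mem _
        · obtain ⟨p, -, rfl⟩ := Finset.mem_image.mp hg'; exact chG_mem _
      · -- coverage
        intro j hj
        obtain ⟨e, heE, hy1, hj2⟩ := hserve y hy j hj
        have hCe2ne : (C e.2).Nonempty := ⟨_, hj2⟩
        by_cases hAe : Alv e.1
        · -- mixed edge : transition arc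
          have hnAy : ¬ Alv y := (htwinfacts y hy).2.2
          obtain ⟨t, h, harc, hAt, hnAh, hrt, hrh⟩ := reach_split hy1.2 hAe hnAy
          have hα : ((t, h) : TigVertex ℕ × TigVertex ℕ) ∈ Ty y := by
            rw [hTy]
            dsimp only
            rw [Finset.mem_filter, Finset.mem_filter]
            exact ⟨⟨harc, hnAh⟩, hAt, ⟨(htwinfacts y hy).1, hrh⟩⟩
          obtain ⟨u, hu⟩ := hAt
          have hu1 : u ∈ C0 e.1 := cluster_mono_reach hrt hu
          obtain ⟨S, hSF, hxS⟩ := hP7' e heE hCe2ne u hu1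
          obtain ⟨g, hg, hSg⟩ := hcovS S hSF
          have hpre : ∃ g ∈ G, ∃ S ∈ F', S ⊆ g ∧
              (aVert S ∈ C0 (t, h).1 ∨ bVert S ∈ C0 (t, h).1) := by
            refine ⟨g, hg, S, hSF, hSg, ?_⟩
            rcases hxS with h' | h'
            · exact Or.inl (h' ▸ hu)
            · exact Or.inr (h' ▸ hu)
          have hspec := chG_spec _ hpre
          obtain ⟨S', hS'F, hS'g, htwin⟩ := hspec
          refine ⟨fT (t, h), Finset.mem_union_left _
            (Finset.mem_union_right _ (Finset.mem_image.mpr ⟨(t, h), hα, rfl⟩)), ?_⟩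
          have htwin' : aVert S' ∈ C e.1 ∨ bVert S' ∈ C e.1 := by
            rcases htwin with h' | h'
            · exact Or.inl (hC0sub _ (cluster_mono_reach hrt h'))
            · exact Or.inr (hC0sub _ (cluster_mono_reach hrt h'))
          obtain ⟨s', hs', heq⟩ := hP8 e heE S' htwin' _ hj2
          have hjs : j = s' := Sum.inl.inj heq
          exact hS'g (hjs ▸ hs')
        · -- pure edge
          have heR1 : e ∈ R1 := by
            rw [hR1, Finset.mem_filter]
            exact ⟨heE, ⟨y, hy1⟩, hAe⟩
          by_cases hleg : legit e.2
          · have heR1L : e ∈ R1L y := by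
              rw [hR1L]
              dsimp only
              rw [Finset.mem_filter]
              exact ⟨heR1, hy1, hleg⟩
            have hpre : ∃ g ∈ G, ∀ u ∈ C e.2, ∃ j' ∈ g, u = Sum.inl j' := hleg
            have hspec := chG_spec _ hpre
            obtain ⟨j', hj', heq⟩ := hspec _ hj2
            refine ⟨fE e, Finset.mem_union_left _ (Finset.mem_union_left _
              (Finset.mem_image.mpr ⟨e, heR1L, rfl⟩)), ?_⟩
            have : j = j' := Sum.inl.inj heq
            exact this ▸ hj'
          · -- weird target
            have hMtwin : aVert M ∈ C e.1 ∨ bVert M ∈ C e.1 := by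
              rcases hy with rfl | rfl
              · exact Or.inl (by rw [← haM]; exact hy1)
              · exact Or.inr (by rw [← hbM]; exact hy1)
            have hCe2M : ∀ u ∈ C e.2, ∃ s ∈ M, u = Sum.inl s := hP8 e heE M hMtwin
            have hinlVb0 : (Sum.inl j : TigVertex ℕ) ∈ Vb0 :=
              mem_tigV.mpr (Or.inl ⟨j, hMU hj, rfl⟩)
            have hAe2 : Alv e.2 := ⟨Sum.inl j, hinlVb0, hj2.2⟩
            have hWe2 : Wd e.2 := by
              refine ⟨hAe2, ?_, hleg⟩
              intro u hu
              obtain ⟨s, -, hs⟩ := hCe2M u hu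
              exact ⟨s, hs⟩
            have hnWj : ¬ Wd (Sum.inl j) := by
              intro hW
              apply hW.2.2
              obtain ⟨g, hg, hjg⟩ := hUG j (hMU hj)
              refine ⟨g, hg, ?_⟩
              intro u hu
              rw [hCsing _ (hVb0sub hinlVb0)] at hu
              exact ⟨j, hjg, hu⟩
            obtain ⟨t, h, harc, hWt, hnWh, hrt, hrh⟩ := reach_split hj2.2 hWe2 hnWj
            have hAh : Alv h := ⟨Sum.inl j, hinlVb0, hrh⟩
            have hα : ((t, h) : TigVertex ℕ × TigVertex ℕ) ∈ R3 := by
              rw [hR3, Finset.mem_filter]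
              exact ⟨harc, hWt, hAh⟩
            have hCsub : C h ⊆ C e.2 :=
              cluster_mono_reach (hrt.tail harc)
            have hlegh : legit h := by
              by_contra hneg
              apply hnWh
              refine ⟨hAh, ?_, hneg⟩
              intro u hu
              obtain ⟨s, -, hs⟩ := hCe2M u (hCsub hu)
              exact ⟨s, hs⟩
            have hspec := chG_spec
              (fun g => ∀ u ∈ C (t, h).2, ∃ j' ∈ g, u = Sum.inl j') hlegh
            have hjCh : (Sum.inl j : TigVertex ℕ) ∈ C h := ⟨hVb0sub hinlVb0, hrh⟩
            obtain ⟨j', hj', heq⟩ := hspec _ hjCh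
            refine ⟨fE (t, h), Finset.mem_union_right _
              (Finset.mem_image.mpr ⟨(t, h), hα, rfl⟩), ?_⟩
            have : j = j' := Sum.inl.inj heq
            exact this ▸ hj'
      · -- cardinality of the pieces
        calc ((R1L y).image fE ∪ (Ty y).image fT ∪ R3.image fE).card
            ≤ ((R1L y).image fE ∪ (Ty y).image fT).card + (R3.image fE).card :=
              Finset.card_union_le _ _
          _ ≤ ((R1L y).image fE).card + ((Ty y).image fT).card + (R3.image fE).card :=
              Nat.add_le_add_right (Finset.card_union_le _ _) _
          _ ≤ (R1L y).card + (Ty y).card + R3.card :=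
              add_le_add (add_le_add (Finset.card_image_le) (Finset.card_image_le))
                (Finset.card_image_le)
    -- spare analysis
    have hR1Lsub : ∀ y, R1L y ⊆ R1 := fun y => Finset.filter_subset _ _
    have hTysub : ∀ y, Ty y ⊆ R2 := fun y => Finset.filter_subset _ _
    have harith2a : ∀ y (a b : TigVertex ℕ × TigVertex ℕ), a ∈ R2 → b ∈ R2 →
        a ∉ Ty y → b ∉ Ty y → a ≠ b →
        (R1L y).card + (Ty y).card + 2 ≤ R1.card + R2.card := by
      intro y a b ha hb hna hnb hab
      have h1 := card_add_two_le (hTysub y) ha hb hna hnb hab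
      have h2 := Finset.card_le_card (hR1Lsub y)
      omega
    have harith2e : ∀ y (a b : TigVertex ℕ × TigVertex ℕ), a ∈ R1 → b ∈ R1 →
        a ∉ R1L y → b ∉ R1L y → a ≠ b →
        (R1L y).card + (Ty y).card + 2 ≤ R1.card + R2.card := by
      intro y a b ha hb hna hnb hab
      have h1 := card_add_two_le (hR1Lsub y) ha hb hna hnb hab
      have h2 := Finset.card_le_card (hTysub y)
      omega
    have harith11 : ∀ y (a b : TigVertex ℕ × TigVertex ℕ), a ∈ R1 → a ∉ R1L y →
        b ∈ R2 → b ∉ Ty y →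
        (R1L y).card + (Ty y).card + 2 ≤ R1.card + R2.card := by
      intro y a b ha hna hb hnb
      have h1 := card_add_one_le (hR1Lsub y) ha hna
      have h2 := card_add_one_le (hTysub y) hb hnb
      omega
    have hspare : ∃ y : TigVertex ℕ, (y = aM ∨ y = bM) ∧
        (R1L y).card + (Ty y).card + 2 ≤ R1.card + R2.card := by
      have hmemR2 : ∀ (t z : TigVertex ℕ), z = aM ∨ z = bM → ((t, z)) ∈ A →
          ((t, z)) ∈ R2 := by
        intro t z hz ht
        rw [hR2, Finset.mem_filter]
        exact ⟨ht, (htwinfacts z hz).2.2⟩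
      have hnotTy_other : ∀ (t y z : TigVertex ℕ), z = aM ∨ z = bM → y ≠ z →
          ((t, z)) ∉ Ty y := by
        intro t y z hz hyz hmem
        rw [hTy] at hmem
        dsimp only at hmem
        have := (Finset.mem_filter.mp hmem).2.2
        rw [(htwinfacts z hz).2.1] at this
        exact hyz this
      have hnotTy_dead : ∀ (t y' : TigVertex ℕ), ¬ Alv t → ((t, y')) ∉ Ty y' ∧
          (∀ y'', ((t, y')) ∉ Ty y'') := by
        intro t y' hdt
        constructor
        · intro hmem
          rw [hTy] at hmem
          dsimp only at hmem
          exact hdt (Finset.mem_filter.mp hmem).2.1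
        · intro y'' hmem
          rw [hTy] at hmem
          dsimp only at hmem
          exact hdt (Finset.mem_filter.mp hmem).2.1
      -- case II helper
      have caseII : ∀ y z : TigVertex ℕ, (y = aM ∨ y = bM) → (z = aM ∨ z = bM) →
          y ≠ z → (∃ e ∈ E, y ∈ C e.1 ∧ (C e.2).Nonempty ∧ Alv e.1) →
          ∃ y' : TigVertex ℕ, (y' = aM ∨ y' = bM) ∧
            (R1L y').card + (Ty y').card + 2 ≤ R1.card + R2.card := by
        intro y z hy hz hyz hmixy
        have hdeady : ¬ Alv y := (htwinfacts y hy).2.2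
        have hdeadz : ¬ Alv z := (htwinfacts z hz).2.2
        have hCyy : C y = {y} := (htwinfacts y hy).2.1
        have hCzz : C z = {z} := (htwinfacts z hz).2.1
        obtain ⟨e₀, he₀, hy₀, hne₀, hAe₀⟩ := hmixy
        have he₀1y : e₀.1 ≠ y := fun h => hdeady (h ▸ hAe₀)
        obtain ⟨t₁, hrt₁, harc₁⟩ := reach_last_arc' hy₀.2 he₀1y
        by_cases hdt : ∃ t, ((t, y) : TigVertex ℕ × TigVertex ℕ) ∈ A ∧ ¬ Alv t
        · -- II.1 : side y
          obtain ⟨tD, htD, htDd⟩ := hdt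
          have hs1R2 : ((tD, y)) ∈ R2 := hmemR2 tD y hy htD
          have hs1n : ((tD, y)) ∉ Ty y := (hnotTy_dead tD y htDd).1
          obtain ⟨j₀, hj₀⟩ := hMne
          obtain ⟨e', he'E, hz1, hj2'⟩ := hserve z hz j₀ hj₀
          by_cases hAe' : Alv e'.1
          · -- mixed z
            have hne'z : e'.1 ≠ z := fun h => hdeadz (h ▸ hAe')
            obtain ⟨w, hrw, harcw⟩ := reach_last_arc' hz1.2 hne'z
            refine ⟨y, hy, harith2a y (tD, y) (w, z) hs1R2 (hmemR2 w z hz harcw)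
              hs1n (hnotTy_other w y z hz hyz) ?_⟩
            intro hcontra
            have h2 : y = z := congrArg Prod.snd hcontra
            exact hyz h2
          · by_cases hyine' : y ∈ C e'.1
            · -- shared pure, use in-arc of z
              have hne'z : e'.1 ≠ z := by
                intro h
                rw [h, hCzz] at hyine'
                exact hyz hyine'
              obtain ⟨w, hrw, harcw⟩ := reach_last_arc' hz1.2 hne'z
              refine ⟨y, hy, harith2a y (tD, y) (w, z) hs1R2 (hmemR2 w z hz harcw)
                hs1n (hnotTy_other w y z hz hyz) ?_⟩
              intro hcontra
              have h2 : y = z := congrArg Prod.snd hcontra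
              exact hyz h2
            · -- pure z-only edge spare
              have he'R1 : e' ∈ R1 := by
                rw [hR1, Finset.mem_filter]
                exact ⟨he'E, ⟨z, hz1⟩, hAe'⟩
              have he'n : e' ∉ R1L y := by
                intro hmem
                rw [hR1L] at hmem
                dsimp only at hmem
                exact hyine' (Finset.mem_filter.mp hmem).2.1
              exact ⟨y, hy, harith11 y e' (tD, y) he'R1 he'n hs1R2 hs1n⟩
        · -- II.2
          have hAt₁ : Alv t₁ := by
            by_contra h
            exact hdt ⟨t₁, harc₁, h⟩
          by_cases htwo : ∃ t t' : TigVertex ℕ,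
              ((t, y)) ∈ A ∧ ((t', y)) ∈ A ∧ t ≠ t'
          · -- II.2a: side z
            obtain ⟨t, t', h1, h2, hne⟩ := htwo
            refine ⟨z, hz, harith2a z (t, y) (t', y) (hmemR2 t y hy h1)
              (hmemR2 t' y hy h2) (hnotTy_other t z y hy (Ne.symm hyz))
              (hnotTy_other t' z y hy (Ne.symm hyz)) ?_⟩
            intro hcontra
            have h2 : t = t' := congrArg Prod.fst hcontra
            exact hne h2
          · by_cases hself : ∃ e ∈ E, e.1 = y ∧ (C e.2).Nonempty
            · -- self edge spare + in-arc spare, side z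
              obtain ⟨eS, heSE, heS1, heSne⟩ := hself
              have heSR1 : eS ∈ R1 := by
                rw [hR1, Finset.mem_filter]
                refine ⟨heSE, ?_, ?_⟩
                · rw [heS1, hCyy]
                  exact ⟨y, rfl⟩
                · rw [heS1]
                  exact hdeady
              have heSn : eS ∉ R1L z := by
                intro hmem
                rw [hR1L] at hmem
                dsimp only at hmem
                have hzc := (Finset.mem_filter.mp hmem).2.1
                rw [heS1, hCyy] at hzc
                exact hyz hzc.symm
              exact ⟨z, hz, harith11 z eS (t₁, y) heSR1 heSn (hmemR2 t₁ y hy harc₁)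
                (hnotTy_other t₁ z y hy (Ne.symm hyz))⟩
            · -- contradiction: M would be inside a single F' set
              exfalso
              have huniq : ∀ t, ((t, y) : TigVertex ℕ × TigVertex ℕ) ∈ A → t = t₁ := by
                intro t ht
                by_contra hne
                exact htwo ⟨t, t₁, ht, harc₁, hne⟩
              obtain ⟨u, hu⟩ := hAt₁
              have hu0 : u ∈ C0 e₀.1 := cluster_mono_reach hrt₁ hu
              obtain ⟨Sq, hSqF, hxq⟩ := hP7' e₀ he₀ hne₀ u hu0
              obtain ⟨g, hgG, hSg⟩ := hcovS Sq hSqF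
              apply hnoG g hgG
              intro j hj
              apply hSg
              obtain ⟨e, heE, hy1, hj2⟩ := hserve y hy j hj
              have hCe2 : (C e.2).Nonempty := ⟨_, hj2⟩
              have hne1 : e.1 ≠ y := fun h => hself ⟨e, heE, h, hCe2⟩
              obtain ⟨t, hrt, harct⟩ := reach_last_arc' hy1.2 hne1
              have htt : t = t₁ := huniq t harct
              rw [htt] at hrt
              have hu1 : u ∈ C0 e.1 := cluster_mono_reach hrt hu
              have htwin : aVert Sq ∈ C e.1 ∨ bVert Sq ∈ C e.1 := by
                rcases hxq with h' | h'
                · exact Or.inl (h' ▸ hC0sub _ hu1)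
                · exact Or.inr (h' ▸ hC0sub _ hu1)
              obtain ⟨s, hs, heq⟩ := hP8 e heE Sq htwin _ hj2
              have : j = s := Sum.inl.inj heq
              exact this ▸ hs
      by_cases hmix : ∃ e ∈ E, (aM ∈ C e.1 ∨ bM ∈ C e.1) ∧ (C e.2).Nonempty ∧ Alv e.1
      · obtain ⟨e, he, hor, hne, hAe⟩ := hmix
        rcases hor with h | h
        · exact caseII aM bM (Or.inl rfl) (Or.inr rfl) haMbM ⟨e, he, h, hne, hAe⟩
        · exact caseII bM aM (Or.inr rfl) (Or.inl rfl) (Ne.symm haMbM) ⟨e, he, h, hne, hAe⟩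
      · push_neg at hmix
        by_cases hsh : ∃ e ∈ E, aM ∈ C e.1 ∧ bM ∈ C e.1 ∧ (C e.2).Nonempty
        · -- I.a : two dead-tailed in-arcs
          obtain ⟨e₀, he₀, ha0, hb0, hne0⟩ := hsh
          have hdead0 : ¬ Alv e₀.1 := hmix e₀ he₀ (Or.inl ha0) hne0
          have hne_a : e₀.1 ≠ aM := by
            intro h
            rw [h, hCaM] at hb0
            exact haMbM hb0.symm
          have hne_b : e₀.1 ≠ bM := by
            intro h
            rw [h, hCbM] at ha0
            exact haMbM ha0
          obtain ⟨w, hrw, harcw⟩ := reach_last_arc' ha0.2 hne_a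
          obtain ⟨w', hrw', harcw'⟩ := reach_last_arc' hb0.2 hne_b
          refine ⟨aM, Or.inl rfl, harith2a aM (w, aM) (w', bM)
            (hmemR2 w aM (Or.inl rfl) harcw) (hmemR2 w' bM (Or.inr rfl) harcw')
            ((hnotTy_dead w aM (hdead_mono hdead0 hrw)).2 aM)
            ((hnotTy_dead w' bM (hdead_mono hdead0 hrw')).2 aM) ?_⟩
          intro hcontra
          have h2 : aM = bM := congrArg Prod.snd hcontra
          exact haMbM h2
        · -- I.b
          obtain ⟨j₀, hj₀⟩ := hMne
          obtain ⟨ea, heaE, ha1, haj⟩ := hserve aM (Or.inl rfl) j₀ hj₀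
          obtain ⟨eb, hebE, hb1, hbj⟩ := hserve bM (Or.inr rfl) j₀ hj₀
          have hdeada : ¬ Alv ea.1 := hmix ea heaE (Or.inl ha1) ⟨_, haj⟩
          have hdeadb : ¬ Alv eb.1 := hmix eb hebE (Or.inr hb1) ⟨_, hbj⟩
          have heaR1 : ea ∈ R1 := by
            rw [hR1, Finset.mem_filter]
            exact ⟨heaE, ⟨aM, ha1⟩, hdeada⟩
          have hebR1 : eb ∈ R1 := by
            rw [hR1, Finset.mem_filter]
            exact ⟨hebE, ⟨bM, hb1⟩, hdeadb⟩
          have hanotb : bM ∉ C ea.1 := fun h => hsh ⟨ea, heaE, ha1, h, ⟨_, haj⟩⟩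
          have hbnota : aM ∉ C eb.1 := fun h => hsh ⟨eb, hebE, h, hb1, ⟨_, hbj⟩⟩
          have hneab : ea ≠ eb := fun h => hanotb (h ▸ hb1)
          by_cases hbtwo : ∃ e ∈ E, bM ∈ C e.1 ∧ (C e.2).Nonempty ∧ e ≠ eb
          · obtain ⟨e', he'E, hb1', hne', hneeb⟩ := hbtwo
            have he'R1 : e' ∈ R1 := by
              rw [hR1, Finset.mem_filter]
              exact ⟨he'E, ⟨bM, hb1'⟩, hmix e' he'E (Or.inr hb1') hne'⟩
            have he'n : e' ∉ R1L aM := by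
              intro hmem
              rw [hR1L] at hmem
              dsimp only at hmem
              exact hsh ⟨e', he'E, (Finset.mem_filter.mp hmem).2.1, hb1', hne'⟩
            have hebn : eb ∉ R1L aM := by
              intro hmem
              rw [hR1L] at hmem
              dsimp only at hmem
              exact hsh ⟨eb, hebE, (Finset.mem_filter.mp hmem).2.1, hb1, ⟨_, hbj⟩⟩
            exact ⟨aM, Or.inl rfl, harith2e aM e' eb he'R1 hebR1 he'n hebn hneeb⟩
          · -- unique b-edge
            push_neg at hbtwo
            have hMsub : ∀ j ∈ M, Sum.inl j ∈ C eb.2 := by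
              intro j hj
              obtain ⟨e, heE, h1, h2⟩ := hserve bM (Or.inr rfl) j hj
              have heeb : e = eb := hbtwo e heE h1 ⟨_, h2⟩
              rw [heeb] at h2
              exact h2
            have hnleg : ¬ legit eb.2 := by
              rintro ⟨g, hgG, hgl⟩
              apply hnoG g hgG
              intro j hj
              obtain ⟨j', hj', heq⟩ := hgl _ (hMsub j hj)
              have : j = j' := Sum.inl.inj heq
              exact this ▸ hj'
            have hebn : eb ∉ R1L bM := by
              intro hmem
              rw [hR1L] at hmem
              dsimp only at hmem
              exact hnleg (Finset.mem_filter.mp hmem).2.2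
            have hean : ea ∉ R1L bM := by
              intro hmem
              rw [hR1L] at hmem
              dsimp only at hmem
              exact hanotb (Finset.mem_filter.mp hmem).2.1
            exact ⟨bM, Or.inr rfl, harith2e bM ea eb heaR1 hebR1 hean hebn hneab⟩
    obtain ⟨y, hy, hineq⟩ := hspare
    obtain ⟨X, hXG, hXcov, hXcard⟩ := hpieces y hy
    refine ⟨X, hXG, hXcov, ?_⟩
    omega
  obtain ⟨X, hXG, hXcov, hle⟩ := hcount
  exact ⟨V0, A0, E0, X, hcomp0, hXG, hXcov, hle⟩

end Chunk4

section Chunk5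

/-- Lower bound for compressions of twinned incidence graphs of nice families. -/
lemma lower_bound_nice (U : Finset ℕ) :
    ∀ n : ℕ, ∀ F : Finset (Finset ℕ), (F.filter fun S => 2 ≤ S.card).card = n →
    (∀ S ∈ F, S.Nonempty) → (∀ S ∈ F, S ⊆ U) → (∀ j ∈ U, {j} ∈ F) →
    (∀ S ∈ F, 2 ≤ S.card → predN S ∈ F) →
    ∀ (V : Finset (TigVertex ℕ)) (A E : Finset (TigVertex ℕ × TigVertex ℕ)),
    IsDagCompression (tigV U F) (tigE F) V A E →
    2 * F.card + 2 * (F.filter fun S => 2 ≤ S.card).card ≤ A.card + E.card := by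
  intro n
  induction n using Nat.strong_induction_on with
  | _ n ih =>
    intro F hcard hne hsub hsing hpred V A E hD
    rcases Nat.eq_zero_or_pos n with rfl | hpos
    · rw [hcard]
      have := twin_lower_bound hne hD
      omega
    · -- pick a maximum-cardinality non-singleton set M
      have hfne : (F.filter fun S => 2 ≤ S.card).Nonempty := by
        rw [← Finset.card_pos, hcard]; exact hpos
      obtain ⟨M, hMf, hMmax⟩ := Finset.exists_max_image
        (F.filter fun S => 2 ≤ S.card) Finset.card hfne
      have hMF : M ∈ F := (Finset.mem_filter.mp hMf).1
      have hM2 : 2 ≤ M.card := (Finset.mem_filter.mp hMf).2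
      have hMne : M.Nonempty := Finset.card_pos.mp (by omega)
      set F' := F.erase M with hF'
      have hMnotF' : M ∉ F' := Finset.notMem_erase _ _
      have hF'F : F' ⊆ F := Finset.erase_subset _ _
      have hnoG : ∀ g ∈ F', ¬ M ⊆ g := by
        intro g hg hMg
        have hgF : g ∈ F := hF'F hg
        have hgne : g ≠ M := (Finset.mem_erase.mp hg).1
        have hg2 : 2 ≤ g.card := le_trans hM2 (Finset.card_le_card hMg)
        have hgf : g ∈ F.filter fun S => 2 ≤ S.card := Finset.mem_filter.mpr ⟨hgF, hg2⟩
        have hle := hMmax g hgf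
        have : M = g := Finset.eq_of_subset_of_card_le hMg hle
        exact hgne this.symm
      have hinsert : insert M F' = F := Finset.insert_erase hMF
      have hD' : IsDagCompression (tigV U (insert M F')) (tigE (insert M F')) V A E := by
        rw [hinsert]; exact hD
      obtain ⟨V₀, A₀, E₀, X, hcomp₀, hXsub, hXcov, hle⟩ :=
        excision U F' M F' hMnotF' hMne (hsub M hMF) (fun S hS => hsub S (hF'F hS))
          (fun S hS => ⟨S, hS, Finset.Subset.refl S⟩) hnoG
          (fun j hj => ⟨{j}, by
            refine Finset.mem_erase.mpr ⟨?_, hsing j hj⟩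
            intro h
            rw [← h] at hM2
            simp at hM2, Finset.mem_singleton_self j⟩) hD'
      -- X has at least two elements
      have h2X : 2 ≤ X.card := by
        by_contra hlt
        push_neg at hlt
        interval_cases hX : X.card
        · obtain ⟨j, hj⟩ := hMne
          obtain ⟨g, hg, -⟩ := hXcov j hj
          rw [Finset.card_eq_zero.mp hX] at hg
          exact absurd hg (Finset.notMem_empty _)
        · obtain ⟨g, hg⟩ := Finset.card_eq_one.mp hX
          have hgX : g ∈ X := by rw [hg]; exact Finset.mem_singleton_self _
          apply hnoG g (hXsub hgX)
          intro j hj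
          obtain ⟨g', hg', hjg⟩ := hXcov j hj
          rw [hg, Finset.mem_singleton] at hg'
          rw [← hg']
          exact hjg
      -- apply the induction hypothesis to F'
      have hcard' : (F'.filter fun S => 2 ≤ S.card).card = n - 1 := by
        rw [hF', Finset.filter_erase, Finset.card_erase_of_mem hMf, hcard]
      have hIH := ih (n - 1) (by omega) F' hcard'
        (fun S hS => hne S (hF'F hS)) (fun S hS => hsub S (hF'F hS))
        (fun j hj => by
          refine Finset.mem_erase.mpr ⟨?_, hsing j hj⟩
          intro h
          rw [← h] at hM2
          simp at hM2)
        (fun S hS h2 => by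
          have hSF := hF'F hS
          refine Finset.mem_erase.mpr ⟨?_, hpred S hSF h2⟩
          intro h
          have hc1 : (predN S).card = S.card - 1 := predN_card (hne S hSF)
          have hc2 : S.card ≤ M.card := hMmax S (Finset.mem_filter.mpr ⟨hSF, h2⟩)
          rw [h] at hc1
          omega)
        V₀ A₀ E₀ hcomp₀
      have hFcard : F'.card = F.card - 1 := Finset.card_erase_of_mem hMF
      have hF1 : 1 ≤ F.card := Finset.card_pos.mpr ⟨M, hMF⟩
      rw [hcard]
      rw [hcard'] at hIH
      omega

end Chunk5

section Chunk6

theorem set_cover_iff_compression' (n : ℕ) (hn : 2 ≤ n)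
    (T : Finset (Finset ℕ)) (hT : ∀ S ∈ T, S ⊆ Finset.Icc 1 n)
    (hcov : T.sup id = Finset.Icc 1 n) (hUT : Finset.Icc 1 n ∉ T) (k : ℕ) :
    (∃ X ⊆ T, X.sup id = Finset.Icc 1 n ∧ X.card ≤ k) ↔
      ∃ (V : Finset (TigVertex ℕ)) (A E : Finset (TigVertex ℕ × TigVertex ℕ)),
        IsDagCompression
          (tigV (Finset.Icc 1 n) (insert (Finset.Icc 1 n) (hatCollection n T)))
          (tigE (insert (Finset.Icc 1 n) (hatCollection n T))) V A E ∧
        A.card + E.card ≤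
          minCompSize (tigV (Finset.Icc 1 n) (hatCollection n T))
            (tigE (hatCollection n T)) + k + 2 := by
  classical
  set U := Finset.Icc 1 n with hUdef
  set H := hatCollection n T with hHdef
  have hUne : U.Nonempty := ⟨1, Finset.mem_Icc.mpr ⟨le_refl 1, by omega⟩⟩
  have h0U : (0 : ℕ) ∉ U := by
    rw [hUdef]
    intro h
    have := (Finset.mem_Icc.mp h).1
    omega
  have hmemHat : ∀ S : Finset ℕ, S ∈ H ↔
      ((∃ j ∈ Finset.Icc 1 n, S = {j}) ∨
       (S ≠ ∅ ∧ ∃ S₁ ∈ T, ∃ i ∈ Finset.Icc 1 n, S = S₁ ∩ Finset.Icc 1 i)) := by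
    intro S
    rw [hHdef]
    simp only [hatCollection, Finset.mem_union, Finset.mem_image, Finset.mem_erase,
      Finset.mem_product]
    constructor
    · rintro (⟨j, hj, h⟩ | ⟨hne, ⟨p, ⟨hp1, hp2⟩, h⟩⟩)
      · exact Or.inl ⟨j, hj, h.symm⟩
      · exact Or.inr ⟨hne, p.1, hp1, p.2, hp2, h.symm⟩
    · rintro (⟨j, hj, h⟩ | ⟨hne, S₁, hS₁, i, hi, h⟩)
      · exact Or.inl ⟨j, hj, h.symm⟩
      · exact Or.inr ⟨hne, ⟨(S₁, i), ⟨hS₁, hi⟩, h.symm⟩⟩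
  have hHfacts : ∀ S ∈ H, S.Nonempty ∧ S ⊆ U := by
    intro S hS
    rcases (hmemHat S).mp hS with ⟨j, hj, rfl⟩ | ⟨hne, S₁, hS₁, i, hi, rfl⟩
    · exact ⟨Finset.singleton_nonempty j, Finset.singleton_subset_iff.mpr hj⟩
    · refine ⟨Finset.nonempty_iff_ne_empty.mpr hne, ?_⟩
      exact Finset.Subset.trans Finset.inter_subset_left (hT S₁ hS₁)
  have hHne : ∀ S ∈ H, S.Nonempty := fun S hS => (hHfacts S hS).1
  have hHsub : ∀ S ∈ H, S ⊆ U := fun S hS => (hHfacts S hS).2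
  have hsing : ∀ j ∈ U, ({j} : Finset ℕ) ∈ H :=
    fun j hj => (hmemHat _).mpr (Or.inl ⟨j, hj, rfl⟩)
  have hpredH : ∀ S ∈ H, 2 ≤ S.card → predN S ∈ H := by
    intro S hS h2
    rcases (hmemHat S).mp hS with ⟨j, hj, rfl⟩ | ⟨hne, S₁, hS₁, i, hi, hSeq⟩
    · simp at h2
    · have hSne : S.Nonempty := Finset.card_pos.mp (by omega)
      set m := mxN S with hm
      have hmS : m ∈ S := mxN_mem hSne
      have hmS' : m ∈ S₁ ∧ m ∈ Finset.Icc 1 i := by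
        rw [hSeq] at hmS
        exact Finset.mem_inter.mp hmS
      have hm2 : 2 ≤ m := by
        obtain ⟨x, hxS, hxm⟩ := Finset.exists_mem_ne (s := S) (by omega) m
        have hx1 : 1 ≤ x := by
          have := hxS
          rw [hSeq] at this
          exact (Finset.mem_Icc.mp (Finset.mem_inter.mp this).2).1
        have hxle : x ≤ m := le_mxN hxS
        omega
      have hmn : m ≤ n := by
        have : m ∈ Finset.Icc 1 n := hT S₁ hS₁ hmS'.1
        exact (Finset.mem_Icc.mp this).2
      have hmi : m ≤ i := (Finset.mem_Icc.mp hmS'.2).2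
      have key : predN S = S₁ ∩ Finset.Icc 1 (m - 1) := by
        ext x
        constructor
        · intro hx
          have hx1 := (Finset.mem_erase.mp hx).1
          have hx2 := (Finset.mem_erase.mp hx).2
          have hxle : x ≤ m := le_mxN hx2
          rw [hSeq] at hx2
          obtain ⟨hxa, hxb⟩ := Finset.mem_inter.mp hx2
          have hxi := Finset.mem_Icc.mp hxb
          refine Finset.mem_inter.mpr ⟨hxa, Finset.mem_Icc.mpr ⟨hxi.1, ?_⟩⟩
          omega
        · intro hx
          obtain ⟨hxa, hxb⟩ := Finset.mem_inter.mp hx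
          have hxi := Finset.mem_Icc.mp hxb
          refine Finset.mem_erase.mpr ⟨by omega, ?_⟩
          rw [hSeq]
          exact Finset.mem_inter.mpr ⟨hxa, Finset.mem_Icc.mpr ⟨hxi.1, by omega⟩⟩
      apply (hmemHat _).mpr
      refine Or.inr ⟨?_, S₁, hS₁, m - 1, Finset.mem_Icc.mpr ⟨by omega, by omega⟩, key⟩
      exact Finset.nonempty_iff_ne_empty.mp (predN_nonempty h2)
  have hUH : U ∉ H := by
    intro hU
    rcases (hmemHat U).mp hU with ⟨j, hj, hUj⟩ | ⟨hne, S₁, hS₁, i, hi, hSeq⟩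
    · have h1 : U.card = 1 := by rw [hUj]; exact Finset.card_singleton j
      have h2 : U.card = n := by rw [hUdef, Nat.card_Icc]; omega
      omega
    · have hU1 : U ⊆ S₁ := by
        intro x hx
        have := hSeq ▸ hx
        exact (Finset.mem_inter.mp this).1
      have : S₁ = U := Finset.Subset.antisymm (hT S₁ hS₁) hU1
      rw [this] at hS₁
      exact hUT hS₁
  have hTmem : ∀ S ∈ T, S ≠ ∅ → S ∈ H := by
    intro S hS hne
    apply (hmemHat _).mpr
    refine Or.inr ⟨hne, S, hS, n, Finset.mem_Icc.mpr ⟨by omega, le_refl n⟩, ?_⟩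
    exact (Finset.inter_eq_left.mpr (hT S hS)).symm
  have hUG : ∀ j ∈ U, ∃ g ∈ T, j ∈ g := by
    intro j hj
    rw [← hcov] at hj
    exact (coe_sup_id T).mp hj
  have hcovH : ∀ S ∈ H, ∃ g ∈ T, S ⊆ g := by
    intro S hS
    rcases (hmemHat S).mp hS with ⟨j, hj, rfl⟩ | ⟨hne, S₁, hS₁, i, hi, hSeq⟩
    · obtain ⟨g, hg, hjg⟩ := hUG j hj
      exact ⟨g, hg, Finset.singleton_subset_iff.mpr hjg⟩
    · exact ⟨S₁, hS₁, by rw [hSeq]; exact Finset.inter_subset_left⟩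
  have hnoG : ∀ g ∈ T, ¬ U ⊆ g := by
    intro g hg hUg
    have : g = U := Finset.Subset.antisymm (hT g hg) hUg
    rw [this] at hg
    exact hUT hg
  have hBle : 2 * H.card + 2 * (H.filter fun S => 2 ≤ S.card).card ≤
      minCompSize (tigV U H) (tigE H) := by
    apply le_minCompSize
    · exact ⟨tigV U H, ∅, tigE H, trivial_compression U H hHsub⟩
    · intro V A E hD
      exact lower_bound_nice U _ H rfl hHne hHsub hsing hpredH V A E hD
  constructor
  · rintro ⟨X, hXT, hXsup, hXk⟩
    set X' := X.erase ∅ with hX'def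
    have hX'H : X' ⊆ H := by
      intro S hS
      exact hTmem S (hXT (Finset.mem_of_mem_erase hS)) (Finset.mem_erase.mp hS).1
    have hX'sup : X'.sup id = U := by
      rw [← hXsup]
      apply le_antisymm
      · exact Finset.sup_le fun g hg => Finset.le_sup (Finset.mem_of_mem_erase hg)
      · apply Finset.sup_le
        intro g hg
        by_cases hge : g = ∅
        · rw [hge]
          exact bot_le
        · exact Finset.le_sup (Finset.mem_erase.mpr ⟨hge, hg⟩)
    obtain ⟨V, A, E, hD, hsize⟩ :=
      trie_compression U h0U hUne H X' hHne hHsub hpredH hUH hX'H hX'sup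
    refine ⟨V, A, E, hD, ?_⟩
    have hX'k : X'.card ≤ k :=
      le_trans (Finset.card_le_card (Finset.erase_subset _ _)) hXk
    rw [hsize]
    omega
  · rintro ⟨V, A, E, hD, hsize⟩
    obtain ⟨V₀, A₀, E₀, X, hcomp₀, hXT, hXcov, hle⟩ :=
      excision U H U T hUH hUne (Finset.Subset.refl U) hHsub hcovH hnoG hUG hD
    have hs : minCompSize (tigV U H) (tigE H) ≤ A₀.card + E₀.card :=
      minCompSize_le hcomp₀
    refine ⟨X, hXT, ?_, by omega⟩
    apply le_antisymm
    · apply Finset.sup_le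
      intro g hg
      exact Finset.le_iff_subset.mpr (hT g (hXT hg))
    · intro j hj
      obtain ⟨g, hg, hjg⟩ := hXcov j hj
      exact (coe_sup_id X).mpr ⟨g, hg, hjg⟩

end Chunk6

/-- for `U = {1,…,n}` (`n ≥ 2`) and a collection `T` of subsets of `U`
covering `U` with `U ∉ T`, letting `T̂` be `T` augmented by all singletons and all
nonempty initial segments, and `ŝ` the minimum compression size of the twinned incidence
graph of `T̂`: `U` has a cover from `T` of size at most `k` iff the twinned incidence
graph of `T̂ ∪ {U}` has a DAG compression of size at most `ŝ + k + 2`. -/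
theorem set_cover_iff_compression (n : ℕ) (hn : 2 ≤ n)
    (T : Finset (Finset ℕ)) (hT : ∀ S ∈ T, S ⊆ Finset.Icc 1 n)
    (hcov : T.sup id = Finset.Icc 1 n) (hUT : Finset.Icc 1 n ∉ T) (k : ℕ) :
    (∃ X ⊆ T, X.sup id = Finset.Icc 1 n ∧ X.card ≤ k) ↔
      ∃ (V : Finset (TigVertex ℕ)) (A E : Finset (TigVertex ℕ × TigVertex ℕ)),
        IsDagCompression
          (tigV (Finset.Icc 1 n) (insert (Finset.Icc 1 n) (hatCollection n T)))
          (tigE (insert (Finset.Icc 1 n) (hatCollection n T))) V A E ∧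
        A.card + E.card ≤
          minCompSize (tigV (Finset.Icc 1 n) (hatCollection n T))
            (tigE (hatCollection n T)) + k + 2 :=
  set_cover_iff_compression' n hn T hT hcov hUT k
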